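/- arXiv:1812.00047 — 6 statements merged into one kernel-verified Lean document; each statement's English description precedes it below -/
import Mathlib

section
/- Let m ≥ n ≥ 0 be integers. Then in the field ℚ(X_1,…,X_m,X_1^*,…,X_n^*) one has the identity P_{m,n} = (1/(n!·(m−n)!)) · Σ_{w ∈ W} w·S_{m,n}, where the sum runs over all w in W = 𝔖_m × 𝔖_n and n!·(m−n)! is the order of the subgroup W' of pairs (σ,τ) ∈ 𝔖_m × 𝔖_n with σ(i) = τ(i) for all 1 ≤ i ≤ n. -/
open MvPolynomial Equiv Finset

noncomputable section

namespace Stmt0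

variable (m n : ℕ)

/-- The field `ℚ(X_1,…,X_m,X_1^*,…,X_n^*)` of rational functions:
the `X_j` correspond to `Sum.inl j`, the `X_k^*` to `Sum.inr k`. -/
abbrev RF : Type := FractionRing (MvPolynomial (Fin m ⊕ Fin n) ℚ)

/-- The canonical map from polynomials to rational functions. -/
def toRF : MvPolynomial (Fin m ⊕ Fin n) ℚ →+* RF m n := algebraMap _ _

/-- The variable `X_j`, `1 ≤ j ≤ m`. -/
def Xl (j : Fin m) : MvPolynomial (Fin m ⊕ Fin n) ℚ := X (Sum.inl j)

/-- The variable `X_k^*`, `1 ≤ k ≤ n`. -/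
def Xr (k : Fin n) : MvPolynomial (Fin m ⊕ Fin n) ℚ := X (Sum.inr k)

/-- Numerator of `P_{m,n}`:
`∏_{1≤j≠k≤m}(X_j−X_k) · ∏_{1≤j≠k≤n}(X_j^*−X_k^*)`. -/
def Pnum : MvPolynomial (Fin m ⊕ Fin n) ℚ :=
  (∏ pr ∈ (univ : Finset (Fin m)).offDiag, (Xl m n pr.1 - Xl m n pr.2)) *
    ∏ pr ∈ (univ : Finset (Fin n)).offDiag, (Xr m n pr.1 - Xr m n pr.2)

/-- Denominator of `P_{m,n}`: `∏_{1≤j≤m, 1≤k≤n}(X_j+X_k^*)`. -/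
def Pden : MvPolynomial (Fin m ⊕ Fin n) ℚ :=
  ∏ j : Fin m, ∏ k : Fin n, (Xl m n j + Xr m n k)

/-- Numerator of `S_{m,n}`:
`∏_{1≤j<k≤n}(X_j^*−X_k^*) · ∏_{1≤j<k≤m}(X_j−X_k) · ∏_{n+1≤k<j≤m}(X_j−X_k)`. -/
def Snum : MvPolynomial (Fin m ⊕ Fin n) ℚ :=
  (∏ pr ∈ Finset.filter (fun pr : Fin n × Fin n => pr.1 < pr.2) univ,
      (Xr m n pr.1 - Xr m n pr.2)) *
    (∏ pr ∈ Finset.filter (fun pr : Fin m × Fin m => pr.1 < pr.2) univ,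
      (Xl m n pr.1 - Xl m n pr.2)) *
    ∏ pr ∈ Finset.filter (fun pr : Fin m × Fin m => n ≤ (pr.2 : ℕ) ∧ pr.2 < pr.1) univ,
      (Xl m n pr.1 - Xl m n pr.2)

/-- Denominator of `S_{m,n}`: `∏_{1≤k≤n}(X_k+X_k^*)`. -/
def Sden (hmn : n ≤ m) : MvPolynomial (Fin m ⊕ Fin n) ℚ :=
  ∏ k : Fin n, (Xl m n (Fin.castLE hmn k) + Xr m n k)

lemma prod_pairs_lt {F : Type*} [CommMonoid F] {k : ℕ} (f : Fin k → Fin k → F) :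
    ∏ pr ∈ Finset.filter (fun pr : Fin k × Fin k => pr.1 < pr.2) univ, f pr.1 pr.2
      = ∏ i : Fin k, ∏ j ∈ Ioi i, f i j := by
  rw [Finset.prod_sigma']
  refine Finset.prod_nbij' (fun pr => ⟨pr.1, pr.2⟩) (fun x => (x.1, x.2)) ?_ ?_ ?_ ?_ ?_ <;>
    simp +contextual [Finset.mem_sigma, Finset.mem_Ioi]

lemma prod_offDiag {F : Type*} [CommMonoid F] {k : ℕ} (f : Fin k → Fin k → F) :
    ∏ pr ∈ (univ : Finset (Fin k)).offDiag, f pr.1 pr.2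
      = (∏ pr ∈ Finset.filter (fun pr : Fin k × Fin k => pr.1 < pr.2) univ, f pr.1 pr.2) *
        ∏ pr ∈ Finset.filter (fun pr : Fin k × Fin k => pr.1 < pr.2) univ, f pr.2 pr.1 := by
  have h1 : (univ : Finset (Fin k)).offDiag
      = Finset.filter (fun pr : Fin k × Fin k => pr.1 < pr.2) univ
        ∪ Finset.filter (fun pr : Fin k × Fin k => pr.2 < pr.1) univ := by
    ext pr
    simp only [Finset.mem_offDiag, Finset.mem_union, Finset.mem_filter, Finset.mem_univ,
      true_and, Fin.lt_iff_val_lt_val, Fin.ext_iff, and_true]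
    omega
  have h2 : Disjoint (Finset.filter (fun pr : Fin k × Fin k => pr.1 < pr.2) univ)
      (Finset.filter (fun pr : Fin k × Fin k => pr.2 < pr.1) univ) := by
    refine Finset.disjoint_left.2 fun pr hp hp' => ?_
    simp only [Finset.mem_filter] at hp hp'
    exact absurd hp'.2 (not_lt_of_gt hp.2)
  rw [h1, Finset.prod_union h2]
  congr 1
  refine Finset.prod_nbij' (fun pr => (pr.2, pr.1)) (fun pr => (pr.2, pr.1)) ?_ ?_ ?_ ?_ ?_ <;>
    simp +contextual
lemma vdm_perm {F : Type*} [CommRing F] {k : ℕ} (v : Fin k → F) (τ : Perm (Fin k)) :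
    ∏ i : Fin k, ∏ j ∈ Ioi i, (v (τ j) - v (τ i))
      = (Perm.sign τ : ℤ) * ∏ i : Fin k, ∏ j ∈ Ioi i, (v j - v i) := by
  rw [← Matrix.det_vandermonde, ← Matrix.det_vandermonde]
  have : Matrix.vandermonde (fun i => v (τ i)) = (Matrix.vandermonde v).submatrix τ id := by
    ext i j; simp [Matrix.vandermonde_apply]
  rw [this, Matrix.det_permute]

lemma prod_pairs_perm {F : Type*} [CommRing F] {k : ℕ} (v : Fin k → F) (τ : Perm (Fin k)) :
    ∏ pr ∈ Finset.filter (fun pr : Fin k × Fin k => pr.1 < pr.2) univ, (v (τ pr.1) - v (τ pr.2))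
      = (Perm.sign τ : ℤ) *
        ∏ pr ∈ Finset.filter (fun pr : Fin k × Fin k => pr.1 < pr.2) univ, (v pr.1 - v pr.2) := by
  have key : ∀ w : Fin k → F,
      ∏ pr ∈ Finset.filter (fun pr : Fin k × Fin k => pr.1 < pr.2) univ, (w pr.1 - w pr.2)
        = (-1 : F) ^ (Finset.filter (fun pr : Fin k × Fin k => pr.1 < pr.2) univ).card *
            ∏ i : Fin k, ∏ j ∈ Ioi i, (w j - w i) := by
    intro w
    rw [← prod_pairs_lt (fun i j => w j - w i), ← Finset.prod_const, ← Finset.prod_mul_distrib]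
    exact Finset.prod_congr rfl fun pr _ => by ring
  rw [key (fun i => v (τ i)), key v, vdm_perm]
  ring
lemma vdm_split {F : Type*} [CommMonoid F] {n : ℕ} (g : Fin (n+1) → Fin (n+1) → F) :
    ∏ k : Fin (n+1), ∏ l ∈ Ioi k, g k l
      = (∏ k : Fin n, ∏ l ∈ Ioi k, g k.castSucc l.castSucc) *
        ∏ k : Fin n, g k.castSucc (Fin.last n) := by
  rw [← prod_pairs_lt g, ← prod_pairs_lt (fun a b : Fin n => g a.castSucc b.castSucc),
    ← Finset.prod_filter_mul_prod_filter_not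
      (Finset.filter (fun pr : Fin (n+1) × Fin (n+1) => pr.1 < pr.2) univ)
      (fun pr => pr.2 ≠ Fin.last n)]
  congr 1
  · refine Finset.prod_bij'
      (fun pr hpr => ((⟨(pr.1 : ℕ), by
          have h1 := Finset.mem_filter.1 hpr
          have h2 := (Finset.mem_filter.1 h1.1).2
          have h3 := h1.2
          have h4 : (pr.1 : ℕ) < (pr.2 : ℕ) := h2
          have h5 : (pr.2 : ℕ) ≠ n := fun hc => h3 (Fin.ext (by simp [hc]))
          omega⟩ : Fin n), (⟨(pr.2 : ℕ), by
          have h1 := Finset.mem_filter.1 hpr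
          have h3 := h1.2
          have h5 : (pr.2 : ℕ) ≠ n := fun hc => h3 (Fin.ext (by simp [hc]))
          have := pr.2.isLt
          omega⟩ : Fin n)))
      (fun pr _ => (pr.1.castSucc, pr.2.castSucc)) ?_ ?_ ?_ ?_ ?_
    · intro pr hpr
      have h1 := Finset.mem_filter.1 hpr
      have h2 : (pr.1 : ℕ) < (pr.2 : ℕ) := (Finset.mem_filter.1 h1.1).2
      exact Finset.mem_filter.2 ⟨Finset.mem_univ _, h2⟩
    · intro pr hpr
      have h2 : (pr.1 : ℕ) < (pr.2 : ℕ) := (Finset.mem_filter.1 hpr).2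
      refine Finset.mem_filter.2 ⟨Finset.mem_filter.2 ⟨Finset.mem_univ _, h2⟩, ?_⟩
      intro hc
      simp only [] at hc
      have h6 := congrArg Fin.val hc
      simp at h6
      omega
    · intro pr hpr
      exact Prod.ext (Fin.ext rfl) (Fin.ext rfl)
    · intro pr hpr
      exact Prod.ext (Fin.ext rfl) (Fin.ext rfl)
    · intro pr hpr
      rfl
  · refine Finset.prod_bij'
      (fun pr hpr => (⟨(pr.1 : ℕ), by
          have h1 := Finset.mem_filter.1 hpr
          have h2 : (pr.1 : ℕ) < (pr.2 : ℕ) := (Finset.mem_filter.1 h1.1).2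
          have h3 : pr.2 = Fin.last n := by
            by_contra hc
            exact absurd h1.2 (by simp [hc])
          have h4 : (pr.2 : ℕ) = n := by rw [h3]; simp
          omega⟩ : Fin n))
      (fun k _ => (k.castSucc, Fin.last n)) ?_ ?_ ?_ ?_ ?_
    · intro pr hpr
      exact Finset.mem_univ _
    · intro k _
      refine Finset.mem_filter.2 ⟨Finset.mem_filter.2 ⟨Finset.mem_univ _, ?_⟩, by simp⟩
      rw [Fin.lt_iff_val_lt_val]
      simp
    · intro pr hpr
      have h1 := Finset.mem_filter.1 hpr
      have h3 : pr.2 = Fin.last n := by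
        by_contra hc
        exact absurd h1.2 (by simp [hc])
      exact Prod.ext (Fin.ext rfl) h3.symm
    · intro k _
      exact Fin.ext rfl
    · intro pr hpr
      have h1 := Finset.mem_filter.1 hpr
      have h3 : pr.2 = Fin.last n := by
        by_contra hc
        exact absurd h1.2 (by simp [hc])
      exact congrArg₂ g (Fin.ext rfl) h3


def CVmat {F : Type*} [Field F] (m n : ℕ) (x : Fin m → F) (y : Fin n → F) :
    Matrix (Fin m) (Fin m) F :=
  Matrix.of fun i j => if h : (j : ℕ) < n then (x i + y ⟨j, h⟩)⁻¹ else x i ^ ((j : ℕ) - n)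

lemma cv_lt {F : Type*} [Field F] {m n : ℕ} (x : Fin m → F) (y : Fin n → F) (i : Fin m)
    (j : Fin m) (hj : (j : ℕ) < n) : CVmat m n x y i j = (x i + y ⟨j, hj⟩)⁻¹ := by
  simp [CVmat, hj]

lemma cv_ge {F : Type*} [Field F] {m n : ℕ} (x : Fin m → F) (y : Fin n → F) (i : Fin m)
    (j : Fin m) (hj : ¬ (j : ℕ) < n) : CVmat m n x y i j = x i ^ ((j : ℕ) - n) := by
  simp [CVmat, hj]

lemma aux_frac {F : Type*} [Field F] (a b c : F) (hb : a + b ≠ 0) (hc : a + c ≠ 0) :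
    (c - b) * (a + b)⁻¹ = (a + c) * ((a + b)⁻¹ - (a + c)⁻¹) := by
  field_simp
  ring

lemma lemB {F : Type*} [Field F] :
    ∀ (n m : ℕ), n ≤ m → ∀ (x : Fin m → F) (y : Fin n → F), (∀ i j, x i + y j ≠ 0) →
    (CVmat m n x y).det * ∏ i : Fin m, ∏ k : Fin n, (x i + y k)
      = (∏ i : Fin m, ∏ j ∈ Ioi i, (x j - x i)) * ∏ k : Fin n, ∏ l ∈ Ioi k, (y l - y k) := by
  intro n
  induction n with
  | zero =>
    intro m hmn x y h
    have h1 : CVmat m 0 x y = Matrix.vandermonde x := by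
      ext i j
      simp [CVmat, Matrix.vandermonde_apply]
    simp [h1, Matrix.det_vandermonde]
  | succ n ih =>
    intro m hmn x y h
    obtain ⟨r, rfl⟩ : ∃ r, m = r + 1 := ⟨m - 1, by omega⟩
    set yl := y (Fin.last n) with hyl
    set y' : Fin n → F := fun k => y k.castSucc with hy'
    have hmn' : n ≤ r + 1 := by omega
    have h' : ∀ i k, x i + y' k ≠ 0 := fun i k => h i k.castSucc
    have hl : ∀ i, x i + yl ≠ 0 := fun i => h i (Fin.last n)
    have hyy : ∀ (j : ℕ) (hj : j < n + 1) (hj' : j = n), y ⟨j, hj⟩ = yl := by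
      intro j hj hj'
      rw [hyl]
      congr 1
      exact Fin.ext (by simp [hj'])
    have hyy' : ∀ (j : ℕ) (hj : j < n + 1) (hj' : j < n), y ⟨j, hj⟩ = y' ⟨j, hj'⟩ := by
      intro j hj hj'
      rw [hy']
      congr 1
    -- M₂ : subtract column n from the earlier Cauchy columns
    set M₂ : Matrix (Fin (r + 1)) (Fin (r + 1)) F :=
      Matrix.of (fun i j => if hj : (j : ℕ) < n
        then (x i + y' ⟨j, hj⟩)⁻¹ - (x i + yl)⁻¹
        else CVmat (r + 1) (n + 1) x y i j) with hM₂
    have hM₂n : ∀ i, M₂ i ⟨n, by omega⟩ = (x i + yl)⁻¹ := by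
      intro i
      show (if hj : n < n then _ else CVmat (r + 1) (n + 1) x y i ⟨n, by omega⟩) = _
      rw [dif_neg (lt_irrefl n), cv_lt x y i _ (Nat.lt_succ_self n), hyy n (Nat.lt_succ_self n) rfl]
    have step1 : (CVmat (r + 1) (n + 1) x y).det = M₂.det := by
      rw [← Matrix.det_transpose (CVmat (r + 1) (n + 1) x y), ← Matrix.det_transpose M₂]
      refine Matrix.det_eq_of_forall_row_eq_smul_add_const
        (fun j : Fin (r + 1) => if (j : ℕ) < n then (1 : F) else 0) ⟨n, by omega⟩
        (by simp) (fun j i => ?_)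
      show CVmat (r + 1) (n + 1) x y i j = M₂ i j +
        (if (j : ℕ) < n then (1:F) else 0) * M₂ i ⟨n, by omega⟩
      rw [hM₂n i]
      by_cases hj : (j : ℕ) < n
      · rw [if_pos hj, cv_lt x y i j (by omega), hyy' j (by omega) hj]
        show _ = (if hj2 : (j : ℕ) < n then (x i + y' ⟨j, hj2⟩)⁻¹ - (x i + yl)⁻¹ else _) + _
        rw [dif_pos hj]
        ring
      · rw [if_neg hj]
        show _ = (if hj2 : (j : ℕ) < n then _ else CVmat (r + 1) (n + 1) x y i j) + _
        rw [dif_neg hj]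
        ring
    -- M₃ : multiply each row by (x i + yl)
    set M₃ : Matrix (Fin (r + 1)) (Fin (r + 1)) F :=
      Matrix.of (fun i j => (x i + yl) * M₂ i j) with hM₃
    have step2 : M₃.det = (∏ i, (x i + yl)) * M₂.det := Matrix.det_mul_column _ _
    -- M₄ : the reduced Cauchy–Vandermonde matrix, with column factors
    set M₄ : Matrix (Fin (r + 1)) (Fin (r + 1)) F :=
      Matrix.of (fun i j => (if hj : (j : ℕ) < n then (yl - y' ⟨j, hj⟩) else 1) *
        CVmat (r + 1) n x y' i j) with hM₄
    have hM₄app : ∀ i j, M₄ i j = (if hj : (j : ℕ) < n then (yl - y' ⟨j, hj⟩) else 1) *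
        CVmat (r + 1) n x y' i j := fun i j => rfl
    have hM₃app : ∀ i j, M₃ i j = (x i + yl) * (if hj : (j : ℕ) < n
        then (x i + y' ⟨j, hj⟩)⁻¹ - (x i + yl)⁻¹
        else CVmat (r + 1) (n + 1) x y i j) := fun i j => rfl
    have step3 : M₄.det = M₃.det := by
      refine Matrix.det_eq_of_forall_col_eq_smul_add_pred
        (fun j : Fin r => if n ≤ (j : ℕ) then -yl else 0) (fun i => ?_) (fun i j => ?_)
      · -- column 0
        have hz : ((0 : Fin (r+1)) : ℕ) = 0 := Fin.val_zero _
        rw [hM₄app, hM₃app]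
        by_cases h0 : 0 < n
        · have h0' : ((0 : Fin (r+1)) : ℕ) < n := by omega
          rw [dif_pos h0', dif_pos h0', cv_lt x y' i _ h0']
          exact aux_frac (x i) (y' ⟨_, h0'⟩) yl (h' i ⟨_, h0'⟩) (hl i)
        · have hn0 : ¬ ((0 : Fin (r+1)) : ℕ) < n := by omega
          rw [dif_neg hn0, dif_neg hn0, cv_ge x y' i _ hn0,
            cv_lt x y i _ (by omega : ((0 : Fin (r+1)) : ℕ) < n + 1),
            hyy _ _ (by omega), one_mul, mul_inv_cancel₀ (hl i)]
          norm_num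
      · -- successor columns
        have hjs : ((j.succ : Fin (r + 1)) : ℕ) = (j : ℕ) + 1 := rfl
        have hjc : ((j.castSucc : Fin (r + 1)) : ℕ) = (j : ℕ) := rfl
        rw [hM₄app, hM₃app, hM₄app]
        beta_reduce
        rcases lt_trichotomy ((j : ℕ) + 1) n with hlt | heq | hgt
        · -- Cauchy columns
          rw [if_neg (by omega), zero_mul, add_zero]
          rw [dif_pos (show ((j.succ : Fin (r+1)) : ℕ) < n by omega),
            dif_pos (show ((j.succ : Fin (r+1)) : ℕ) < n by omega),
            cv_lt x y' i _ (show ((j.succ : Fin (r+1)) : ℕ) < n by omega)]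
          exact aux_frac (x i) (y' ⟨_, _⟩) yl (h' i _) (hl i)
        · -- the all-ones column
          rw [if_neg (by omega), zero_mul, add_zero]
          rw [dif_neg (show ¬ ((j.succ : Fin (r+1)) : ℕ) < n by omega),
            dif_neg (show ¬ ((j.succ : Fin (r+1)) : ℕ) < n by omega),
            cv_ge x y' i _ (show ¬ ((j.succ : Fin (r+1)) : ℕ) < n by omega),
            cv_lt x y i _ (show ((j.succ : Fin (r+1)) : ℕ) < n + 1 by omega),
            hyy _ _ (by rw [hjs]; omega), one_mul, mul_inv_cancel₀ (hl i), hjs, heq]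
          norm_num
        · -- Vandermonde columns
          have h1 : ¬ ((j.succ : Fin (r+1)) : ℕ) < n := by rw [hjs]; omega
          have h3 : ¬ ((j.castSucc : Fin (r+1)) : ℕ) < n := by rw [hjc]; omega
          rw [if_pos (by omega), dif_neg h1, dif_neg h1, dif_neg h3,
            cv_ge x y' i _ h1, cv_ge x y' i _ h3,
            cv_ge x y i _ (by rw [hjs]; omega), one_mul, one_mul, hjs, hjc]
          have e1 : (j : ℕ) + 1 - n = ((j : ℕ) - n) + 1 := by omega
          have e2 : (j : ℕ) + 1 - (n + 1) = (j : ℕ) - n := by omega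
          rw [e1, e2]
          ring
    -- compute det M₄
    have step4 : M₄.det = (∏ k : Fin n, (yl - y' k)) * (CVmat (r + 1) n x y').det := by
      rw [hM₄]
      rw [Matrix.det_mul_row (fun j : Fin (r + 1) =>
        if hj : (j : ℕ) < n then (yl - y' ⟨j, hj⟩) else 1) _]
      congr 1
      rw [← Finset.prod_filter_mul_prod_filter_not univ (fun j : Fin (r + 1) => (j : ℕ) < n)]
      have hone : ∏ j ∈ Finset.filter (fun j : Fin (r + 1) => ¬ (j : ℕ) < n) univ,
          (if hj : (j : ℕ) < n then (yl - y' ⟨j, hj⟩) else 1) = 1 :=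
        Finset.prod_eq_one fun j hj => by
          rw [dif_neg (Finset.mem_filter.1 hj).2]
      rw [hone, mul_one]
      refine Finset.prod_bij'
        (fun a ha => (⟨(a : ℕ), (Finset.mem_filter.1 ha).2⟩ : Fin n))
        (fun k _ => (⟨(k : ℕ), lt_of_lt_of_le k.isLt hmn'⟩ : Fin (r + 1)))
        (fun a _ => Finset.mem_univ _)
        (fun k _ => Finset.mem_filter.2 ⟨Finset.mem_univ _, k.isLt⟩) ?_ ?_ ?_
      · intro a ha
        exact Fin.ext rfl
      · intro k _
        exact Fin.ext rfl
      · intro a ha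
        have haa := (Finset.mem_filter.1 ha).2
        simp only [haa, dif_pos]
    -- assemble
    have ihe := ih (r + 1) hmn' x y' h'
    have hysplit : ∏ k : Fin (n+1), ∏ l ∈ Ioi k, (y l - y k)
        = (∏ k : Fin n, ∏ l ∈ Ioi k, (y' l - y' k)) * ∏ k : Fin n, (yl - y' k) :=
      vdm_split (fun k l => y l - y k)
    have hdsplit : ∏ i : Fin (r+1), ∏ k : Fin (n+1), (x i + y k)
        = (∏ i : Fin (r+1), ∏ k : Fin n, (x i + y' k)) * ∏ i : Fin (r+1), (x i + yl) := by
      rw [← Finset.prod_mul_distrib]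
      refine Finset.prod_congr rfl fun i _ => ?_
      rw [Fin.prod_univ_castSucc]
    rw [step1, hdsplit, hysplit]
    have key : (∏ i : Fin (r+1), (x i + yl)) * (M₂.det *
        (∏ i : Fin (r+1), ∏ k : Fin n, (x i + y' k))) =
        (∏ i : Fin (r+1), ∏ j ∈ Ioi i, (x j - x i)) *
          (∏ k : Fin n, ∏ l ∈ Ioi k, (y' l - y' k)) * ∏ k : Fin n, (yl - y' k) := by
      calc (∏ i : Fin (r+1), (x i + yl)) * (M₂.det *
          (∏ i : Fin (r+1), ∏ k : Fin n, (x i + y' k)))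
          = M₃.det * (∏ i : Fin (r+1), ∏ k : Fin n, (x i + y' k)) := by rw [step2]; ring
        _ = M₄.det * (∏ i : Fin (r+1), ∏ k : Fin n, (x i + y' k)) := by rw [step3]
        _ = (∏ k : Fin n, (yl - y' k)) * ((CVmat (r + 1) n x y').det *
              (∏ i : Fin (r+1), ∏ k : Fin n, (x i + y' k))) := by rw [step4]; ring
        _ = _ := by rw [ihe]; ring
    linear_combination key
lemma lemA' {R : Type*} [CommRing R] {α β : Type*} [Fintype α] [DecidableEq α] [Fintype β]
    [DecidableEq β] (M : Matrix (α ⊕ β) (α ⊕ β) R) :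
    ∑ σ : Perm (α ⊕ β), ((Perm.sign σ : ℤ) : R) *
        (Matrix.det (Matrix.of fun k l : α => M (σ (Sum.inl k)) (Sum.inl l)) *
          Matrix.det (Matrix.of fun k l : β => M (σ (Sum.inr k)) (Sum.inr l)))
      = (Fintype.card (Perm α) * Fintype.card (Perm β) : ℕ) * M.det := by
  have key : ∀ σ : Perm (α ⊕ β),
      ((Perm.sign σ : ℤ) : R) *
        (Matrix.det (Matrix.of fun k l : α => M (σ (Sum.inl k)) (Sum.inl l)) *
          Matrix.det (Matrix.of fun k l : β => M (σ (Sum.inr k)) (Sum.inr l)))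
      = ∑ π₁ : Perm α, ∑ π₂ : Perm β,
          ((Perm.sign (σ * sumCongr π₁ π₂) : ℤ) : R) *
            ∏ j, M ((σ * sumCongr π₁ π₂) j) j := by
    intro σ
    rw [Matrix.det_apply', Matrix.det_apply', Finset.sum_mul_sum, Finset.mul_sum]
    refine Finset.sum_congr rfl fun π₁ _ => ?_
    rw [Finset.mul_sum]
    refine Finset.sum_congr rfl fun π₂ _ => ?_
    have hs : ((Perm.sign (σ * sumCongr π₁ π₂) : ℤ) : R)
        = ((Perm.sign σ : ℤ) : R) * (((Perm.sign π₁ : ℤ) : R) * ((Perm.sign π₂ : ℤ) : R)) := by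
      rw [map_mul, Perm.sign_sumCongr]
      push_cast
      ring
    have hp : ∏ j, M ((σ * sumCongr π₁ π₂) j) j
        = (∏ k : α, M (σ (Sum.inl (π₁ k))) (Sum.inl k)) *
            ∏ k : β, M (σ (Sum.inr (π₂ k))) (Sum.inr k) := by
      rw [Fintype.prod_sum_type]
      simp [Perm.mul_apply]
    rw [hs, hp]
    simp only [Matrix.of_apply]
    ring
  rw [Finset.sum_congr rfl fun σ _ => key σ]
  rw [Finset.sum_comm]
  have inner : ∀ π₁ : Perm α, ∑ σ : Perm (α ⊕ β), ∑ π₂ : Perm β,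
      ((Perm.sign (σ * sumCongr π₁ π₂) : ℤ) : R) * ∏ j, M ((σ * sumCongr π₁ π₂) j) j
      = (Fintype.card (Perm β) : ℕ) * M.det := by
    intro π₁
    rw [Finset.sum_comm]
    rw [Finset.sum_congr rfl fun π₂ _ => ?_]
    · rw [Finset.sum_const, Finset.card_univ, nsmul_eq_mul]
    · exact Equiv.sum_comp (Equiv.mulRight (sumCongr π₁ π₂))
        (fun σ => ((Perm.sign σ : ℤ) : R) * ∏ j, M (σ j) j) |>.trans (Matrix.det_apply' M).symm
  rw [Finset.sum_congr rfl fun π₁ _ => inner π₁, Finset.sum_const, Finset.card_univ,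
    nsmul_eq_mul]
  push_cast
  ring
def eFin {m n : ℕ} (hmn : n ≤ m) : (Fin n ⊕ Fin (m - n)) ≃ Fin m where
  toFun := Sum.elim (Fin.castLE hmn) (fun t => ⟨n + t, by omega⟩)
  invFun := fun j => if h : (j : ℕ) < n then Sum.inl ⟨j, h⟩ else Sum.inr ⟨j - n, by omega⟩
  left_inv := by
    rintro (k | t)
    · simp [k.isLt]
    · have h : ¬ ((n + (t : ℕ)) < n) := by omega
      simp only [Sum.elim_inr, h, dif_neg, not_false_iff, Sum.inr.injEq]
      exact (dif_neg h).trans (congrArg Sum.inr (Fin.ext (show n + (t : ℕ) - n = t by omega)))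
  right_inv := fun j => by
    by_cases h : (j : ℕ) < n
    · simp [h]
    · simp only [h, dif_neg, not_false_iff, Sum.elim_inr]
      exact Fin.ext (by simp; omega)

lemma lemA {R : Type*} [CommRing R] {m n : ℕ} (hmn : n ≤ m) (M : Matrix (Fin m) (Fin m) R) :
    ∑ σ : Perm (Fin m), ((Perm.sign σ : ℤ) : R) *
        (Matrix.det (Matrix.of fun k l : Fin n =>
            M (σ (Fin.castLE hmn k)) (Fin.castLE hmn l)) *
          Matrix.det (Matrix.of fun s t : Fin (m - n) =>
            M (σ ⟨n + s, by omega⟩) ⟨n + t, by omega⟩))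
      = (n.factorial * (m - n).factorial : ℕ) * M.det := by
  classical
  set e := eFin hmn
  have h1 := lemA' (M.submatrix e e)
  rw [Matrix.det_submatrix_equiv_self] at h1
  have h2 : (n.factorial * (m - n).factorial : ℕ)
      = (Fintype.card (Perm (Fin n)) * Fintype.card (Perm (Fin (m - n))) : ℕ) := by
    simp [Fintype.card_perm]
  rw [h2, ← h1, ← Equiv.sum_comp e.permCongr.symm
    (fun σ : Perm (Fin n ⊕ Fin (m - n)) => ((Perm.sign σ : ℤ) : R) *
        (Matrix.det (Matrix.of fun k l : Fin n =>
            M.submatrix e e (σ (Sum.inl k)) (Sum.inl l)) *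
          Matrix.det (Matrix.of fun k l : Fin (m - n) =>
            M.submatrix e e (σ (Sum.inr k)) (Sum.inr l))))]
  refine Finset.sum_congr rfl fun σ _ => ?_
  have hsgn : Perm.sign (e.permCongr.symm σ) = Perm.sign σ := by
    rw [Equiv.permCongr_symm, Perm.sign_permCongr]
  rw [hsgn]
  congr 2
  · congr 1
    ext k l
    simp only [Matrix.of_apply, Matrix.submatrix_apply, Equiv.permCongr_symm,
      Equiv.permCongr_apply, Equiv.symm_symm, Equiv.apply_symm_apply]
    rfl
  · congr 1
    ext s t
    simp only [Matrix.of_apply, Matrix.submatrix_apply, Equiv.permCongr_symm,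
      Equiv.permCongr_apply, Equiv.symm_symm, Equiv.apply_symm_apply]
    rfl
lemma prod_pairs_tail {F : Type*} [CommMonoid F] {m n : ℕ} (hmn : n ≤ m)
    (f : Fin m → Fin m → F) :
    ∏ pr ∈ Finset.filter (fun pr : Fin m × Fin m => n ≤ (pr.2 : ℕ) ∧ pr.2 < pr.1) univ,
        f pr.1 pr.2
      = ∏ s : Fin (m - n), ∏ t ∈ Ioi s,
          f ⟨n + (t : ℕ), by omega⟩ ⟨n + (s : ℕ), by omega⟩ := by
  rw [← prod_pairs_lt (fun s t : Fin (m - n) =>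
    f ⟨n + (t : ℕ), by omega⟩ ⟨n + (s : ℕ), by omega⟩)]
  refine Finset.prod_bij'
    (fun pr hpr => ((⟨(pr.2 : ℕ) - n, by
        have h1 := (Finset.mem_filter.1 hpr).2
        have h2 := pr.2.isLt
        have h3 : (pr.2 : ℕ) < (pr.1 : ℕ) := h1.2
        have h4 := pr.1.isLt
        omega⟩ : Fin (m - n)), (⟨(pr.1 : ℕ) - n, by
        have h1 := (Finset.mem_filter.1 hpr).2
        have h3 : (pr.2 : ℕ) < (pr.1 : ℕ) := h1.2
        have h4 := pr.1.isLt
        omega⟩ : Fin (m - n))))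
    (fun q _ => ((⟨n + (q.2 : ℕ), by omega⟩ : Fin m), (⟨n + (q.1 : ℕ), by omega⟩ : Fin m)))
    ?_ ?_ ?_ ?_ ?_
  · intro pr hpr
    have h1 := (Finset.mem_filter.1 hpr).2
    have h3 : (pr.2 : ℕ) < (pr.1 : ℕ) := h1.2
    refine Finset.mem_filter.2 ⟨Finset.mem_univ _, ?_⟩
    show ((pr.2 : ℕ) - n) < ((pr.1 : ℕ) - n)
    omega
  · intro q hq
    have h1 : (q.1 : ℕ) < (q.2 : ℕ) := (Finset.mem_filter.1 hq).2
    refine Finset.mem_filter.2 ⟨Finset.mem_univ _, ?_, ?_⟩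
    · show n ≤ n + (q.1 : ℕ); omega
    · show ((⟨n + (q.1 : ℕ), by omega⟩ : Fin m) : ℕ) < ((⟨n + (q.2 : ℕ), by omega⟩ : Fin m) : ℕ)
      show n + (q.1 : ℕ) < n + (q.2 : ℕ)
      omega
  · intro pr hpr
    have h1 := (Finset.mem_filter.1 hpr).2
    refine Prod.ext (Fin.ext ?_) (Fin.ext ?_)
    · show n + ((pr.1 : ℕ) - n) = (pr.1 : ℕ)
      have h3 : (pr.2 : ℕ) < (pr.1 : ℕ) := h1.2
      omega
    · show n + ((pr.2 : ℕ) - n) = (pr.2 : ℕ)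
      omega
  · intro q hq
    refine Prod.ext (Fin.ext ?_) (Fin.ext ?_)
    · show n + (q.1 : ℕ) - n = (q.1 : ℕ); omega
    · show n + (q.2 : ℕ) - n = (q.2 : ℕ); omega
  · intro pr hpr
    have h1 := (Finset.mem_filter.1 hpr).2
    have h2 : n ≤ (pr.2 : ℕ) := h1.1
    have h3 : (pr.2 : ℕ) < (pr.1 : ℕ) := h1.2
    congr 1
    · exact Fin.ext (show (pr.1 : ℕ) = n + ((pr.1 : ℕ) - n) by omega)
    · exact Fin.ext (show (pr.2 : ℕ) = n + ((pr.2 : ℕ) - n) by omega)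

lemma lemC {F : Type*} [Field F] (m n : ℕ) (hmn : n ≤ m) (x : Fin m → F) (y : Fin n → F)
    (h : ∀ i j, x i + y j ≠ 0) :
    ∑ w : Perm (Fin m) × Perm (Fin n),
      ((∏ pr ∈ Finset.filter (fun pr : Fin n × Fin n => pr.1 < pr.2) univ,
          (y (w.2 pr.1) - y (w.2 pr.2))) *
        (∏ pr ∈ Finset.filter (fun pr : Fin m × Fin m => pr.1 < pr.2) univ,
          (x (w.1 pr.1) - x (w.1 pr.2))) *
        ∏ pr ∈ Finset.filter (fun pr : Fin m × Fin m => n ≤ (pr.2 : ℕ) ∧ pr.2 < pr.1) univ,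
          (x (w.1 pr.1) - x (w.1 pr.2))) /
        (∏ k : Fin n, (x (w.1 (Fin.castLE hmn k)) + y (w.2 k)))
      = (n.factorial * (m - n).factorial : ℕ) *
          ((∏ pr ∈ (univ : Finset (Fin m)).offDiag, (x pr.1 - x pr.2)) *
              (∏ pr ∈ (univ : Finset (Fin n)).offDiag, (y pr.1 - y pr.2)) /
            ∏ i : Fin m, ∏ k : Fin n, (x i + y k)) := by
  classical
  set M := CVmat m n x y with hM
  set Vx := ∏ pr ∈ Finset.filter (fun pr : Fin m × Fin m => pr.1 < pr.2) univ,
    (x pr.1 - x pr.2) with hVx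
  set Vy := ∏ pr ∈ Finset.filter (fun pr : Fin n × Fin n => pr.1 < pr.2) univ,
    (y pr.1 - y pr.2) with hVy
  have hMC : ∀ (i : Fin m) (l : Fin n), M i (Fin.castLE hmn l) = (x i + y l)⁻¹ := by
    intro i l
    rw [hM, cv_lt x y i _ (show ((Fin.castLE hmn l : Fin m) : ℕ) < n from l.isLt)]
    congr 2
  have hMV : ∀ (i : Fin m) (t : Fin (m - n)),
      M i ⟨n + (t : ℕ), by omega⟩ = x i ^ (t : ℕ) := by
    intro i t
    rw [hM, cv_ge x y i _ (by show ¬ n + (t : ℕ) < n; omega)]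
    congr 1
    show n + (t : ℕ) - n = (t : ℕ)
    omega
  -- per-σ determinants
  have detτ : ∀ σ : Perm (Fin m),
      ∑ τ : Perm (Fin n), ((Perm.sign τ : ℤ) : F) *
          ∏ k : Fin n, (x (σ (Fin.castLE hmn k)) + y (τ k))⁻¹
        = Matrix.det (Matrix.of fun k l : Fin n =>
            M (σ (Fin.castLE hmn k)) (Fin.castLE hmn l)) := by
    intro σ
    have hB : (Matrix.of fun k l : Fin n => M (σ (Fin.castLE hmn k)) (Fin.castLE hmn l))
        = Matrix.of fun k l : Fin n => (x (σ (Fin.castLE hmn k)) + y l)⁻¹ := by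
      ext k l
      exact hMC _ _
    rw [hB, ← Matrix.det_transpose, Matrix.det_apply']
    rfl
  have hT : ∀ σ : Perm (Fin m),
      ∏ pr ∈ Finset.filter (fun pr : Fin m × Fin m => n ≤ (pr.2 : ℕ) ∧ pr.2 < pr.1) univ,
          (x (σ pr.1) - x (σ pr.2))
        = Matrix.det (Matrix.of fun s t : Fin (m - n) =>
            M (σ ⟨n + s, by omega⟩) ⟨n + t, by omega⟩) := by
    intro σ
    have hV : (Matrix.of fun s t : Fin (m - n) => M (σ ⟨n + s, by omega⟩) ⟨n + t, by omega⟩)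
        = Matrix.vandermonde (fun s : Fin (m - n) => x (σ ⟨n + (s : ℕ), by omega⟩)) := by
      ext s t
      exact hMV _ _
    rw [hV, Matrix.det_vandermonde,
      prod_pairs_tail hmn (fun a b : Fin m => x (σ a) - x (σ b))]
  calc ∑ w : Perm (Fin m) × Perm (Fin n),
      ((∏ pr ∈ Finset.filter (fun pr : Fin n × Fin n => pr.1 < pr.2) univ,
          (y (w.2 pr.1) - y (w.2 pr.2))) *
        (∏ pr ∈ Finset.filter (fun pr : Fin m × Fin m => pr.1 < pr.2) univ,
          (x (w.1 pr.1) - x (w.1 pr.2))) *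
        ∏ pr ∈ Finset.filter (fun pr : Fin m × Fin m => n ≤ (pr.2 : ℕ) ∧ pr.2 < pr.1) univ,
          (x (w.1 pr.1) - x (w.1 pr.2))) /
        (∏ k : Fin n, (x (w.1 (Fin.castLE hmn k)) + y (w.2 k)))
      = ∑ σ : Perm (Fin m), ∑ τ : Perm (Fin n),
          (Vx * Vy) * (((Perm.sign σ : ℤ) : F) *
            (Matrix.det (Matrix.of fun s t : Fin (m - n) =>
                M (σ ⟨n + s, by omega⟩) ⟨n + t, by omega⟩) *
              (((Perm.sign τ : ℤ) : F) *
                ∏ k : Fin n, (x (σ (Fin.castLE hmn k)) + y (τ k))⁻¹))) := by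
        rw [Fintype.sum_prod_type]
        refine Finset.sum_congr rfl fun σ _ => Finset.sum_congr rfl fun τ _ => ?_
        rw [div_eq_mul_inv, ← Finset.prod_inv_distrib, prod_pairs_perm y τ,
          prod_pairs_perm x σ, ← hVx, ← hVy, hT σ]
        ring
    _ = ∑ σ : Perm (Fin m), (Vx * Vy) * (((Perm.sign σ : ℤ) : F) *
          (Matrix.det (Matrix.of fun k l : Fin n =>
              M (σ (Fin.castLE hmn k)) (Fin.castLE hmn l)) *
            Matrix.det (Matrix.of fun s t : Fin (m - n) =>
              M (σ ⟨n + s, by omega⟩) ⟨n + t, by omega⟩))) := by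
        refine Finset.sum_congr rfl fun σ _ => ?_
        have hstep : ∑ τ : Perm (Fin n),
            (Vx * Vy) * (((Perm.sign σ : ℤ) : F) *
              (Matrix.det (Matrix.of fun s t : Fin (m - n) =>
                  M (σ ⟨n + s, by omega⟩) ⟨n + t, by omega⟩) *
                (((Perm.sign τ : ℤ) : F) *
                  ∏ k : Fin n, (x (σ (Fin.castLE hmn k)) + y (τ k))⁻¹)))
            = (Vx * Vy) * ((Perm.sign σ : ℤ) : F) *
                Matrix.det (Matrix.of fun s t : Fin (m - n) =>
                  M (σ ⟨n + s, by omega⟩) ⟨n + t, by omega⟩) *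
              ∑ τ : Perm (Fin n), ((Perm.sign τ : ℤ) : F) *
                ∏ k : Fin n, (x (σ (Fin.castLE hmn k)) + y (τ k))⁻¹ := by
          rw [Finset.mul_sum]
          exact Finset.sum_congr rfl fun τ _ => by ring
        rw [hstep, detτ σ]
        ring
    _ = (Vx * Vy) * ((n.factorial * (m - n).factorial : ℕ) * M.det) := by
        rw [← Finset.mul_sum, ← lemA hmn M]
    _ = (n.factorial * (m - n).factorial : ℕ) *
          ((∏ pr ∈ (univ : Finset (Fin m)).offDiag, (x pr.1 - x pr.2)) *
              (∏ pr ∈ (univ : Finset (Fin n)).offDiag, (y pr.1 - y pr.2)) /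
            ∏ i : Fin m, ∏ k : Fin n, (x i + y k)) := by
        have hPD : (∏ i : Fin m, ∏ k : Fin n, (x i + y k)) ≠ 0 :=
          Finset.prod_ne_zero_iff.2 fun i _ =>
            Finset.prod_ne_zero_iff.2 fun k _ => h i k
        have hdet : M.det = ((∏ i : Fin m, ∏ j ∈ Ioi i, (x j - x i)) *
            ∏ k : Fin n, ∏ l ∈ Ioi k, (y l - y k)) /
              (∏ i : Fin m, ∏ k : Fin n, (x i + y k)) := by
          rw [eq_div_iff hPD]
          exact lemB n m hmn x y h
        rw [hdet, prod_offDiag (fun a b : Fin m => x a - x b),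
          prod_offDiag (fun a b : Fin n => y a - y b),
          prod_pairs_lt (fun a b : Fin m => x b - x a),
          prod_pairs_lt (fun a b : Fin n => y b - y a), ← hVx, ← hVy]
        field_simp

/-- For integers `m ≥ n ≥ 0`, in the field `ℚ(X_1,…,X_m,X_1^*,…,X_n^*)` one has
`P_{m,n} = (1/(n!·(m−n)!)) · Σ_{w ∈ 𝔖_m × 𝔖_n} w·S_{m,n}`, where `𝔖_m` permutes the
variables `X_1,…,X_m` and `𝔖_n` permutes `X_1^*,…,X_n^*`. -/
theorem statement0 (hmn : n ≤ m) :
    toRF m n (Pnum m n) / toRF m n (Pden m n) =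
      ((n.factorial * (m - n).factorial : ℕ) : RF m n)⁻¹ *
        ∑ w : Perm (Fin m) × Perm (Fin n),
          toRF m n (rename (Sum.map ⇑w.1 ⇑w.2) (Snum m n)) /
            toRF m n (rename (Sum.map ⇑w.1 ⇑w.2) (Sden m n hmn)) := by
  classical
  set x : Fin m → RF m n := fun i => toRF m n (X (Sum.inl i)) with hx
  set y : Fin n → RF m n := fun k => toRF m n (X (Sum.inr k)) with hy
  have hinj : ∀ p : MvPolynomial (Fin m ⊕ Fin n) ℚ, toRF m n p = 0 → p = 0 := by
    intro p hp
    exact (IsFractionRing.to_map_eq_zero_iff (K := RF m n)).1 hp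
  have hxy : ∀ i j, x i + y j ≠ 0 := by
    intro i j hcon
    have h1 : toRF m n (X (Sum.inl i) + X (Sum.inr j)) = 0 := by
      rw [map_add]; exact hcon
    have h2 := hinj _ h1
    have h3 := congrArg (eval (fun _ => (1 : ℚ))) h2
    simp at h3
  have hc : ((n.factorial * (m - n).factorial : ℕ) : RF m n) ≠ 0 := by
    intro hcon
    rw [← map_natCast (toRF m n)] at hcon
    have h2 := hinj _ hcon
    have h3 : ((n.factorial * (m - n).factorial : ℕ) : MvPolynomial (Fin m ⊕ Fin n) ℚ) ≠ 0 :=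
      Nat.cast_ne_zero.2 (by positivity)
    exact h3 h2
  have e1 : toRF m n (Pnum m n) =
      (∏ pr ∈ (univ : Finset (Fin m)).offDiag, (x pr.1 - x pr.2)) *
        ∏ pr ∈ (univ : Finset (Fin n)).offDiag, (y pr.1 - y pr.2) := by
    simp [Pnum, Xl, Xr, map_prod, map_sub, hx, hy]
  have e2 : toRF m n (Pden m n) = ∏ i : Fin m, ∏ k : Fin n, (x i + y k) := by
    simp [Pden, Xl, Xr, map_prod, map_add, hx, hy]
  have e3 : ∀ w : Perm (Fin m) × Perm (Fin n),
      toRF m n (rename (Sum.map ⇑w.1 ⇑w.2) (Snum m n)) =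
        (∏ pr ∈ Finset.filter (fun pr : Fin n × Fin n => pr.1 < pr.2) univ,
            (y (w.2 pr.1) - y (w.2 pr.2))) *
          (∏ pr ∈ Finset.filter (fun pr : Fin m × Fin m => pr.1 < pr.2) univ,
            (x (w.1 pr.1) - x (w.1 pr.2))) *
          ∏ pr ∈ Finset.filter (fun pr : Fin m × Fin m => n ≤ (pr.2 : ℕ) ∧ pr.2 < pr.1) univ,
            (x (w.1 pr.1) - x (w.1 pr.2)) := by
    intro w
    simp [Snum, Xl, Xr, map_prod, map_sub, map_mul, rename_X, Sum.map_inl, Sum.map_inr, hx, hy]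
  have e4 : ∀ w : Perm (Fin m) × Perm (Fin n),
      toRF m n (rename (Sum.map ⇑w.1 ⇑w.2) (Sden m n hmn)) =
        ∏ k : Fin n, (x (w.1 (Fin.castLE hmn k)) + y (w.2 k)) := by
    intro w
    simp [Sden, Xl, Xr, map_prod, map_add, rename_X, Sum.map_inl, Sum.map_inr, hx, hy]
  have hsum : ∑ w : Perm (Fin m) × Perm (Fin n),
      toRF m n (rename (Sum.map ⇑w.1 ⇑w.2) (Snum m n)) /
        toRF m n (rename (Sum.map ⇑w.1 ⇑w.2) (Sden m n hmn))
      = ∑ w : Perm (Fin m) × Perm (Fin n),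
        ((∏ pr ∈ Finset.filter (fun pr : Fin n × Fin n => pr.1 < pr.2) univ,
            (y (w.2 pr.1) - y (w.2 pr.2))) *
          (∏ pr ∈ Finset.filter (fun pr : Fin m × Fin m => pr.1 < pr.2) univ,
            (x (w.1 pr.1) - x (w.1 pr.2))) *
          ∏ pr ∈ Finset.filter (fun pr : Fin m × Fin m => n ≤ (pr.2 : ℕ) ∧ pr.2 < pr.1) univ,
            (x (w.1 pr.1) - x (w.1 pr.2))) /
          (∏ k : Fin n, (x (w.1 (Fin.castLE hmn k)) + y (w.2 k))) :=
    Finset.sum_congr rfl fun w _ => by rw [e3 w, e4 w]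
  rw [e1, e2, hsum, lemC m n hmn x y hxy, inv_mul_cancel_left₀ hc]

end Stmt0
end
end

section
/- Let m ≥ n ≥ 0 be integers and let x_1,…,x_m be pairwise distinct purely imaginary complex numbers; set x_k^* = −x_k for 1 ≤ k ≤ n and x = (x_1,…,x_m,x_1^*,…,x_n^*). Then: (a) ∏_{1≤j≤m,1≤k≤n, j≠k}(x_j+x_k^*) ≠ 0 and (∏_{1≤j≠k≤m}(x_j−x_k) · ∏_{1≤j≠k≤n}(x_j^*−x_k^*)) / ∏_{1≤j≤m,1≤k≤n, j≠k}(x_j+x_k^*) = S*_{m,n}(x); (b) for every s ∈ ℂ with Re(s) > 0 all denominators occurring in S_{m,n,s}(x) are nonzero and s^n·S_{m,n,s}(x) = S*_{m,n}(x); (c) for every s ∈ ℂ with Re(s) > 0 all denominators occurring in P_{m,n,s}(x) are nonzero, and s^n·P_{m,n,s}(x) tends to S*_{m,n}(x) as s → 0 with Re(s) > 0. -/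
open Finset Filter

noncomputable section

lemma key (m n : ℕ) (x : Fin m → ℂ) :
    (∏ p ∈ univ.filter (fun p : Fin m × Fin m => p.1 ≠ p.2), (x p.1 - x p.2)) *
      (∏ p ∈ univ.filter
          (fun p : Fin m × Fin m => p.1 ≠ p.2 ∧ (p.1 : ℕ) < n ∧ (p.2 : ℕ) < n),
        (x p.1 - x p.2)) =
    (∏ p ∈ univ.filter (fun p : Fin m × Fin m => (p.2 : ℕ) < n ∧ p.1 ≠ p.2),
        (x p.1 - x p.2)) *
      ((∏ p ∈ univ.filter (fun p : Fin m × Fin m => p.2 < p.1 ∧ (p.1 : ℕ) < n),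
          (x p.1 - x p.2)) *
        (∏ p ∈ univ.filter (fun p : Fin m × Fin m => p.1 < p.2), (x p.1 - x p.2)) *
        ∏ p ∈ univ.filter (fun p : Fin m × Fin m => n ≤ (p.2 : ℕ) ∧ p.2 < p.1),
          (x p.1 - x p.2)) := by
  simp only [prod_filter, ← prod_mul_distrib]
  refine prod_congr rfl fun p _ => ?_
  simp only [Fin.lt_def, Ne, Fin.ext_iff]
  split_ifs <;> first | (exfalso; omega) | ring

lemma reidx1 (m n : ℕ) (hmn : n ≤ m) (x : Fin m → ℂ) :
    ∏ p ∈ (univ : Finset (Fin n)).offDiag,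
        (-x (Fin.castLE hmn p.1) - -x (Fin.castLE hmn p.2)) =
    ∏ p ∈ univ.filter
        (fun p : Fin m × Fin m => p.1 ≠ p.2 ∧ (p.1 : ℕ) < n ∧ (p.2 : ℕ) < n),
      (x p.1 - x p.2) := by
  apply Finset.prod_nbij
    (i := fun p : Fin n × Fin n => (Fin.castLE hmn p.2, Fin.castLE hmn p.1))
  · intro a ha
    simp only [mem_offDiag, mem_univ, true_and] at ha
    simp only [mem_filter, mem_univ, true_and, Fin.coe_castLE]
    exact ⟨fun h => ha (Fin.castLE_inj.mp h).symm, a.2.isLt, a.1.isLt⟩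
  · intro a _ b _ h
    simp only [Prod.mk.injEq] at h
    exact Prod.ext (Fin.castLE_inj.mp h.2) (Fin.castLE_inj.mp h.1)
  · intro b hb
    simp only [coe_filter, mem_univ, true_and, Set.mem_setOf_eq] at hb
    refine ⟨(⟨(b.2 : ℕ), hb.2.2⟩, ⟨(b.1 : ℕ), hb.2.1⟩), ?_, ?_⟩
    · simp only [Set.mem_toFinset, mem_coe, mem_offDiag, mem_univ, true_and]
      exact fun h => hb.1 (Fin.ext (congrArg Fin.val h).symm)
    · exact Prod.ext (Fin.ext rfl) (Fin.ext rfl)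
  · intro a _; ring

lemma reidx2 (m n : ℕ) (hmn : n ≤ m) (x : Fin m → ℂ) :
    ∏ p ∈ univ.filter (fun p : Fin n × Fin n => p.1 < p.2),
        (-x (Fin.castLE hmn p.1) - -x (Fin.castLE hmn p.2)) =
    ∏ p ∈ univ.filter (fun p : Fin m × Fin m => p.2 < p.1 ∧ (p.1 : ℕ) < n),
      (x p.1 - x p.2) := by
  apply Finset.prod_nbij
    (i := fun p : Fin n × Fin n => (Fin.castLE hmn p.2, Fin.castLE hmn p.1))
  · intro a ha
    simp only [mem_filter, mem_univ, true_and, Fin.lt_def] at ha ⊢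
    exact ⟨ha, a.2.isLt⟩
  · intro a _ b _ h
    simp only [Prod.mk.injEq] at h
    exact Prod.ext (Fin.castLE_inj.mp h.2) (Fin.castLE_inj.mp h.1)
  · intro b hb
    simp only [coe_filter, mem_univ, true_and, Set.mem_setOf_eq, Fin.lt_def] at hb
    refine ⟨(⟨(b.2 : ℕ), lt_trans hb.1 hb.2⟩, ⟨(b.1 : ℕ), hb.2⟩), ?_, ?_⟩
    · simp only [mem_coe, mem_filter, mem_univ, true_and, Fin.lt_def]
      exact hb.1
    · exact Prod.ext (Fin.ext rfl) (Fin.ext rfl)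
  · intro a _; ring

lemma reidx3 (m n : ℕ) (hmn : n ≤ m) (x : Fin m → ℂ) :
    ∏ p ∈ univ.filter (fun p : Fin m × Fin n => (p.1 : ℕ) ≠ (p.2 : ℕ)),
        (x p.1 + -x (Fin.castLE hmn p.2)) =
    ∏ p ∈ univ.filter (fun p : Fin m × Fin m => (p.2 : ℕ) < n ∧ p.1 ≠ p.2),
      (x p.1 - x p.2) := by
  apply Finset.prod_nbij
    (i := fun p : Fin m × Fin n => (p.1, Fin.castLE hmn p.2))
  · intro a ha
    simp only [mem_filter, mem_univ, true_and] at ha ⊢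
    exact ⟨a.2.isLt, fun h => ha (congrArg Fin.val h)⟩
  · intro a _ b _ h
    simp only [Prod.mk.injEq] at h
    exact Prod.ext h.1 (Fin.castLE_inj.mp h.2)
  · intro b hb
    simp only [coe_filter, mem_univ, true_and, Set.mem_setOf_eq] at hb
    refine ⟨(b.1, ⟨(b.2 : ℕ), hb.1⟩), ?_, ?_⟩
    · simp only [mem_coe, mem_filter, mem_univ, true_and]
      exact fun h => hb.2 (Fin.ext h)
    · exact Prod.ext rfl (Fin.ext rfl)
  · intro a _; ring

lemma offdiag_eq (m : ℕ) :
    (univ : Finset (Fin m)).offDiag = univ.filter (fun p : Fin m × Fin m => p.1 ≠ p.2) := by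
  ext p; simp [mem_offDiag]

/-- Let `m ≥ n ≥ 0` and let `x_1,…,x_m` be pairwise distinct purely imaginary complex
numbers; set `x_k^* = −x_k` for `1 ≤ k ≤ n`. Then:
(a) the denominator `∏_{1≤j≤m,1≤k≤n, j≠k}(x_j+x_k^*)` is nonzero and
`P*_{m,n}` evaluated at `x` equals `S*_{m,n}(x)`;
(b) for every `s` with `Re(s) > 0` all denominators of `S_{m,n,s}(x)` are nonzero and
`s^n·S_{m,n,s}(x) = S*_{m,n}(x)`;
(c) for every `s` with `Re(s) > 0` all denominators of `P_{m,n,s}(x)` are nonzero, and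
`s^n·P_{m,n,s}(x) → S*_{m,n}(x)` as `s → 0` with `Re(s) > 0`. -/
theorem statement1 (m n : ℕ) (hmn : n ≤ m) (x : Fin m → ℂ)
    (himg : ∀ j, (x j).re = 0) (hinj : Function.Injective x) :
    let xs : Fin n → ℂ := fun k => -x (Fin.castLE hmn k)
    let Sstar : ℂ :=
      (∏ pr ∈ Finset.filter (fun pr : Fin n × Fin n => pr.1 < pr.2) univ,
          (xs pr.1 - xs pr.2)) *
        (∏ pr ∈ Finset.filter (fun pr : Fin m × Fin m => pr.1 < pr.2) univ,
          (x pr.1 - x pr.2)) *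
        ∏ pr ∈ Finset.filter (fun pr : Fin m × Fin m => n ≤ (pr.2 : ℕ) ∧ pr.2 < pr.1) univ,
          (x pr.1 - x pr.2)
    -- (a)
    ((∏ pr ∈ Finset.filter (fun pr : Fin m × Fin n => (pr.1 : ℕ) ≠ (pr.2 : ℕ)) univ,
          (x pr.1 + xs pr.2)) ≠ 0 ∧
      ((∏ pr ∈ (univ : Finset (Fin m)).offDiag, (x pr.1 - x pr.2)) *
            ∏ pr ∈ (univ : Finset (Fin n)).offDiag, (xs pr.1 - xs pr.2)) /
          (∏ pr ∈ Finset.filter (fun pr : Fin m × Fin n => (pr.1 : ℕ) ≠ (pr.2 : ℕ)) univ,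
            (x pr.1 + xs pr.2)) = Sstar) ∧
    -- (b)
    (∀ s : ℂ, 0 < s.re →
      (∀ k : Fin n, (x (Fin.castLE hmn k) + s / 2) + (xs k + s / 2) ≠ 0) ∧
      s ^ n *
          (((∏ pr ∈ Finset.filter (fun pr : Fin n × Fin n => pr.1 < pr.2) univ,
                ((xs pr.1 + s / 2) - (xs pr.2 + s / 2))) *
              (∏ pr ∈ Finset.filter (fun pr : Fin m × Fin m => pr.1 < pr.2) univ,
                ((x pr.1 + s / 2) - (x pr.2 + s / 2))) *
              ∏ pr ∈ Finset.filter
                  (fun pr : Fin m × Fin m => n ≤ (pr.2 : ℕ) ∧ pr.2 < pr.1) univ,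
                ((x pr.1 + s / 2) - (x pr.2 + s / 2))) /
            ∏ k : Fin n, ((x (Fin.castLE hmn k) + s / 2) + (xs k + s / 2))) = Sstar) ∧
    -- (c)
    (∀ s : ℂ, 0 < s.re → ∀ (j : Fin m) (k : Fin n), (x j + s / 2) + (xs k + s / 2) ≠ 0) ∧
    Tendsto
      (fun s : ℂ =>
        s ^ n *
          (((∏ pr ∈ (univ : Finset (Fin m)).offDiag, ((x pr.1 + s / 2) - (x pr.2 + s / 2))) *
                ∏ pr ∈ (univ : Finset (Fin n)).offDiag, ((xs pr.1 + s / 2) - (xs pr.2 + s / 2))) /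
              ∏ j : Fin m, ∏ k : Fin n, ((x j + s / 2) + (xs k + s / 2))))
      (nhdsWithin 0 {s : ℂ | 0 < s.re}) (nhds Sstar) := by
  intro xs Sstar
  have hne : ∀ (j : Fin m) (k : Fin n), (j : ℕ) ≠ (k : ℕ) →
      x j - x (Fin.castLE hmn k) ≠ 0 := by
    intro j k h
    rw [sub_ne_zero]
    exact fun he => h (congrArg Fin.val (hinj he))
  -- the m×m-indexed denominator
  have hDorig : (∏ pr ∈ Finset.filter (fun pr : Fin m × Fin n => (pr.1 : ℕ) ≠ (pr.2 : ℕ)) univ,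
      (x pr.1 + xs pr.2)) =
      ∏ p ∈ univ.filter (fun p : Fin m × Fin m => (p.2 : ℕ) < n ∧ p.1 ≠ p.2),
        (x p.1 - x p.2) := reidx3 m n hmn x
  have hDne : (∏ p ∈ univ.filter (fun p : Fin m × Fin m => (p.2 : ℕ) < n ∧ p.1 ≠ p.2),
      (x p.1 - x p.2)) ≠ 0 := by
    rw [prod_ne_zero_iff]
    intro p hp
    simp only [mem_filter, mem_univ, true_and] at hp
    exact sub_ne_zero.mpr fun he => hp.2 (hinj he)
  have hS : Sstar =
      (∏ p ∈ univ.filter (fun p : Fin m × Fin m => p.2 < p.1 ∧ (p.1 : ℕ) < n),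
          (x p.1 - x p.2)) *
        (∏ p ∈ univ.filter (fun p : Fin m × Fin m => p.1 < p.2), (x p.1 - x p.2)) *
        ∏ p ∈ univ.filter (fun p : Fin m × Fin m => n ≤ (p.2 : ℕ) ∧ p.2 < p.1),
          (x p.1 - x p.2) := by
    show (∏ pr ∈ Finset.filter (fun pr : Fin n × Fin n => pr.1 < pr.2) univ,
        (-x (Fin.castLE hmn pr.1) - -x (Fin.castLE hmn pr.2))) * _ * _ = _
    rw [reidx2 m n hmn x]
  have hmain : ((∏ pr ∈ (univ : Finset (Fin m)).offDiag, (x pr.1 - x pr.2)) *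
      ∏ pr ∈ (univ : Finset (Fin n)).offDiag, (xs pr.1 - xs pr.2)) =
      (∏ p ∈ univ.filter (fun p : Fin m × Fin m => (p.2 : ℕ) < n ∧ p.1 ≠ p.2),
        (x p.1 - x p.2)) * Sstar := by
    have h2 : (∏ pr ∈ (univ : Finset (Fin n)).offDiag, (xs pr.1 - xs pr.2)) =
        ∏ p ∈ univ.filter
            (fun p : Fin m × Fin m => p.1 ≠ p.2 ∧ (p.1 : ℕ) < n ∧ (p.2 : ℕ) < n),
          (x p.1 - x p.2) := reidx1 m n hmn x
    rw [h2, hS, offdiag_eq m]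
    exact key m n x
  have haeq : ((∏ pr ∈ (univ : Finset (Fin m)).offDiag, (x pr.1 - x pr.2)) *
        ∏ pr ∈ (univ : Finset (Fin n)).offDiag, (xs pr.1 - xs pr.2)) /
      (∏ pr ∈ Finset.filter (fun pr : Fin m × Fin n => (pr.1 : ℕ) ≠ (pr.2 : ℕ)) univ,
        (x pr.1 + xs pr.2)) = Sstar := by
    rw [hDorig, div_eq_iff hDne, hmain, mul_comm]
  refine ⟨⟨?_, haeq⟩, ?_, ?_, ?_⟩
  · rw [hDorig]; exact hDne
  -- (b)
  · intro s hs
    have hs0 : s ≠ 0 := fun h => by simp [h] at hs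
    have hden : ∀ k : Fin n, (x (Fin.castLE hmn k) + s / 2) + (xs k + s / 2) = s := by
      intro k
      show (x (Fin.castLE hmn k) + s / 2) + (-x (Fin.castLE hmn k) + s / 2) = s
      ring
    refine ⟨fun k => by rw [hden k]; exact hs0, ?_⟩
    have e1 : (∏ pr ∈ Finset.filter (fun pr : Fin n × Fin n => pr.1 < pr.2) univ,
        ((xs pr.1 + s / 2) - (xs pr.2 + s / 2))) =
        ∏ pr ∈ Finset.filter (fun pr : Fin n × Fin n => pr.1 < pr.2) univ,
          (xs pr.1 - xs pr.2) := prod_congr rfl fun p _ => by ring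
    have e2 : (∏ pr ∈ Finset.filter (fun pr : Fin m × Fin m => pr.1 < pr.2) univ,
        ((x pr.1 + s / 2) - (x pr.2 + s / 2))) =
        ∏ pr ∈ Finset.filter (fun pr : Fin m × Fin m => pr.1 < pr.2) univ,
          (x pr.1 - x pr.2) := prod_congr rfl fun p _ => by ring
    have e3 : (∏ pr ∈ Finset.filter
        (fun pr : Fin m × Fin m => n ≤ (pr.2 : ℕ) ∧ pr.2 < pr.1) univ,
        ((x pr.1 + s / 2) - (x pr.2 + s / 2))) =
        ∏ pr ∈ Finset.filter (fun pr : Fin m × Fin m => n ≤ (pr.2 : ℕ) ∧ pr.2 < pr.1) univ,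
          (x pr.1 - x pr.2) := prod_congr rfl fun p _ => by ring
    have e4 : (∏ k : Fin n, ((x (Fin.castLE hmn k) + s / 2) + (xs k + s / 2))) = s ^ n := by
      rw [prod_congr rfl fun k _ => hden k, prod_const, card_univ, Fintype.card_fin]
    rw [e1, e2, e3, e4, mul_comm (s ^ n), div_mul_cancel₀ _ (pow_ne_zero n hs0)]
  -- (c) nonvanishing
  · intro s hs j k
    have hre : ((x j + s / 2) + (xs k + s / 2)).re = s.re := by
      have h1 : (x j + s / 2) + (xs k + s / 2) = (x j - x (Fin.castLE hmn k)) + s := by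
        show (x j + s / 2) + (-x (Fin.castLE hmn k) + s / 2) = _
        ring
      rw [h1]
      simp [Complex.add_re, Complex.sub_re, himg]
    intro h0
    rw [h0] at hre
    simp only [Complex.zero_re] at hre
    rw [← hre] at hs
    exact lt_irrefl 0 hs
  -- (c) limit
  · set T := univ.filter (fun p : Fin m × Fin n => (p.1 : ℕ) ≠ (p.2 : ℕ)) with hT
    set N := ((∏ pr ∈ (univ : Finset (Fin m)).offDiag, (x pr.1 - x pr.2)) *
      ∏ pr ∈ (univ : Finset (Fin n)).offDiag, (xs pr.1 - xs pr.2)) with hNdef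
    have hcont : Continuous (fun s : ℂ => ∏ p ∈ T, (x p.1 - x (Fin.castLE hmn p.2) + s)) :=
      continuous_finset_prod _ fun p _ => continuous_const.add continuous_id
    have hD0e : (∏ p ∈ T, (x p.1 - x (Fin.castLE hmn p.2) + (0 : ℂ))) =
        ∏ pr ∈ T, (x pr.1 + xs pr.2) := by
      refine prod_congr rfl fun p _ => ?_
      show x p.1 - x (Fin.castLE hmn p.2) + 0 = x p.1 + -x (Fin.castLE hmn p.2)
      ring
    have hD0ne : (∏ p ∈ T, (x p.1 - x (Fin.castLE hmn p.2) + (0 : ℂ))) ≠ 0 := by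
      rw [prod_ne_zero_iff]
      intro p hp
      rw [hT, mem_filter] at hp
      rw [add_zero]
      exact hne p.1 p.2 hp.2
    have htend : Tendsto (fun s : ℂ => N / ∏ p ∈ T, (x p.1 - x (Fin.castLE hmn p.2) + s))
        (nhdsWithin 0 {s : ℂ | 0 < s.re})
        (nhds (N / ∏ p ∈ T, (x p.1 - x (Fin.castLE hmn p.2) + (0 : ℂ)))) := by
      exact Tendsto.div tendsto_const_nhds
        ((hcont.tendsto 0).mono_left nhdsWithin_le_nhds) hD0ne
    have hval : (N / ∏ p ∈ T, (x p.1 - x (Fin.castLE hmn p.2) + (0 : ℂ))) = Sstar := by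
      rw [hD0e, hNdef, hT]
      exact haeq
    rw [hval] at htend
    refine Tendsto.congr' ?_ htend
    refine eventuallyEq_of_mem self_mem_nhdsWithin fun s hs => ?_
    have hs' : 0 < s.re := hs
    have hs0 : s ≠ 0 := fun h => by simp [h] at hs'
    have n1 : (∏ pr ∈ (univ : Finset (Fin m)).offDiag, ((x pr.1 + s / 2) - (x pr.2 + s / 2))) =
        ∏ pr ∈ (univ : Finset (Fin m)).offDiag, (x pr.1 - x pr.2) :=
      prod_congr rfl fun p _ => by ring
    have n2 : (∏ pr ∈ (univ : Finset (Fin n)).offDiag, ((xs pr.1 + s / 2) - (xs pr.2 + s / 2))) =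
        ∏ pr ∈ (univ : Finset (Fin n)).offDiag, (xs pr.1 - xs pr.2) :=
      prod_congr rfl fun p _ => by ring
    have hdiagcard : (univ.filter (fun p : Fin m × Fin n => (p.1 : ℕ) = (p.2 : ℕ))).card = n := by
      have himg2 : univ.filter (fun p : Fin m × Fin n => (p.1 : ℕ) = (p.2 : ℕ)) =
          image (fun k : Fin n => (Fin.castLE hmn k, k)) univ := by
        ext p
        simp only [mem_filter, mem_univ, true_and, mem_image]
        constructor
        · intro h
          exact ⟨p.2, Prod.ext (Fin.ext h.symm) rfl⟩
        · rintro ⟨k, rfl⟩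
          rfl
      rw [himg2, card_image_of_injective _ (fun a b h => (Prod.ext_iff.mp h).2),
        card_univ, Fintype.card_fin]
    have hsplit : (∏ j : Fin m, ∏ k : Fin n, ((x j + s / 2) + (xs k + s / 2))) =
        s ^ n * ∏ p ∈ T, (x p.1 - x (Fin.castLE hmn p.2) + s) := by
      rw [← Finset.prod_product', Finset.univ_product_univ,
        ← prod_filter_mul_prod_filter_not univ (fun p : Fin m × Fin n => (p.1 : ℕ) = (p.2 : ℕ))]
      congr 1
      · have hstep : ∏ p ∈ univ.filter (fun p : Fin m × Fin n => (p.1 : ℕ) = (p.2 : ℕ)),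
            ((x p.1 + s / 2) + (xs p.2 + s / 2)) =
            ∏ _p ∈ univ.filter (fun p : Fin m × Fin n => (p.1 : ℕ) = (p.2 : ℕ)), s := by
          refine prod_congr rfl fun p hp => ?_
          simp only [mem_filter, mem_univ, true_and] at hp
          have he : p.1 = Fin.castLE hmn p.2 := Fin.ext hp
          rw [he]
          show x (Fin.castLE hmn p.2) + s / 2 + (-x (Fin.castLE hmn p.2) + s / 2) = s
          ring
        rw [hstep, prod_const, hdiagcard]
      · rw [hT]
        refine prod_congr (filter_congr fun p _ => Iff.rfl) fun p hp => ?_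
        show (x p.1 + s / 2) + (-x (Fin.castLE hmn p.2) + s / 2) = _
        ring
    show N / _ = _
    rw [n1, n2, ← hNdef, hsplit, ← mul_div_assoc, mul_div_mul_left _ _ (pow_ne_zero n hs0)]
end
end

section
/- Let p ≥ 1 and let y = (y_1,…,y_p) be purely imaginary complex numbers with y_{p+1−k} = −y_k for 1 ≤ k ≤ ⌊p/2⌋, such that y_j ≠ y_k for all j ≠ k and y_j + y_k ≠ 0 for all j < k with k ≠ p+1−j. Then: (a) ∏_{1≤j≠k≤p}(y_j−y_k) / ∏_{1≤j<k≤p, k≠p+1−j}(y_j+y_k) = T*_p(y); (b) for every s ∈ ℂ with Re(s) > 0 all denominators occurring in T_{p,s}(y) are nonzero and s^{⌊p/2⌋}·T_{p,s}(y) = T*_p(y); (c) for every s ∈ ℂ with Re(s) > 0 all denominators occurring in Q_{p,s}(y) are nonzero, and s^{⌊p/2⌋}·Q_{p,s}(y) tends to T*_p(y) as s → 0 with Re(s) > 0. -/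
open Finset Filter

noncomputable section

namespace S3
variable {p : ℕ}



lemma half_iff (i : Fin p) : (i : ℕ) < p / 2 ↔ i < i.rev := by
  have := i.isLt
  rw [Fin.lt_iff_val_lt_val, Fin.val_rev]
  omega

lemma card_Hf (hp : 1 ≤ p) :
    (filter (fun i : Fin p => (i : ℕ) < p / 2) univ).card = p / 2 := by
  have h2 : p / 2 < p := by omega
  have : (filter (fun i : Fin p => (i : ℕ) < p / 2) univ) = Finset.Iio ⟨p / 2, h2⟩ := by
    ext i
    simp [Fin.lt_iff_val_lt_val]
  rw [this, Fin.card_Iio]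

lemma yrev (y : Fin p → ℂ) (hrev : ∀ i : Fin p, (i : ℕ) < p / 2 → y i.rev = -y i)
    (i : Fin p) (hi : 2 * (i : ℕ) + 1 ≠ p) : y i.rev = -y i := by
  have hlt := i.isLt
  rcases lt_or_ge (i : ℕ) (p / 2) with h | h
  · exact hrev i h
  · have hr : ((i.rev : Fin p) : ℕ) < p / 2 := by rw [Fin.val_rev]; omega
    have := hrev i.rev hr
    rw [Fin.rev_rev] at this
    rw [this, neg_neg]




def Ap (p : ℕ) : Finset (Fin p × Fin p) :=
  filter (fun pr : Fin p × Fin p => pr.1 < pr.2 ∧ pr.2 ≠ pr.1.rev) univ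

def Hp (p : ℕ) : Finset (Fin p × Fin p) :=
  filter (fun pr : Fin p × Fin p => pr.1 < pr.2 ∧ pr.1 < pr.2.rev) univ

def rp (e : Fin p × Fin p) : Fin p × Fin p := (e.2.rev, e.1.rev)

lemma filter_q_A : filter (fun pr : Fin p × Fin p => pr.1 < pr.2.rev) (Ap p) = Hp p := by
  ext e
  simp only [Ap, Hp, mem_filter, mem_univ, true_and]
  constructor
  · rintro ⟨⟨h1, _⟩, h3⟩; exact ⟨h1, h3⟩
  · rintro ⟨h1, h3⟩
    refine ⟨⟨h1, fun hc => ?_⟩, h3⟩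
    rw [hc, Fin.rev_rev] at h3
    exact lt_irrefl _ h3

lemma rp_mem_of_H {e : Fin p × Fin p} (he : e ∈ Hp p) :
    rp e ∈ filter (fun pr : Fin p × Fin p => ¬ pr.1 < pr.2.rev) (Ap p) := by
  simp only [Hp, mem_filter, mem_univ, true_and] at he
  obtain ⟨h1, h3⟩ := he
  simp only [Ap, rp, mem_filter, mem_univ, true_and, Fin.rev_rev]
  refine ⟨⟨by rwa [Fin.rev_lt_rev], fun hc => ?_⟩, not_lt_of_gt h3⟩
  rw [← hc, Fin.rev_rev] at h3
  exact lt_irrefl _ h3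

lemma rp_mem_of_notq {e : Fin p × Fin p}
    (he : e ∈ filter (fun pr : Fin p × Fin p => ¬ pr.1 < pr.2.rev) (Ap p)) :
    rp e ∈ Hp p := by
  simp only [Ap, mem_filter, mem_univ, true_and] at he
  obtain ⟨⟨h1, h2⟩, h3⟩ := he
  simp only [Hp, rp, mem_filter, mem_univ, true_and, Fin.rev_rev]
  refine ⟨by rwa [Fin.rev_lt_rev], lt_of_le_of_ne (not_lt.mp h3) fun hc => h2 ?_⟩
  rw [← hc, Fin.rev_rev]

lemma rp_rp (e : Fin p × Fin p) : rp (rp e) = e := by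
  simp [rp, Fin.rev_rev]

lemma prod_A_split (f : Fin p × Fin p → ℂ) :
    ∏ e ∈ Ap p, f e = ∏ e ∈ Hp p, (f e * f (rp e)) := by
  rw [← Finset.prod_filter_mul_prod_filter_not (Ap p) (fun pr => pr.1 < pr.2.rev) f,
    filter_q_A, Finset.prod_mul_distrib]
  congr 1
  exact Finset.prod_nbij' rp rp (fun e he => rp_mem_of_notq he) (fun e he => rp_mem_of_H he)
    (fun e _ => rp_rp e) (fun e _ => rp_rp e) (fun e _ => by rw [rp_rp])

lemma card_A_split : (Ap p).card = 2 * (Hp p).card := by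
  rw [← Finset.card_filter_add_card_filter_not (s := Ap p)
    (p := fun pr : Fin p × Fin p => pr.1 < pr.2.rev), filter_q_A]
  have : (filter (fun pr : Fin p × Fin p => ¬ pr.1 < pr.2.rev) (Ap p)).card = (Hp p).card :=
    Finset.card_nbij' rp rp (fun e he => rp_mem_of_notq he) (fun e he => rp_mem_of_H he)
      (fun e _ => rp_rp e) (fun e _ => rp_rp e)
  omega



def tp (e : Fin p × Fin p) : Fin p × Fin p := (e.1, e.2.rev)

lemma tp_mem {e : Fin p × Fin p} (he : e ∈ Hp p) : tp e ∈ Hp p := by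
  simp only [Hp, mem_filter, mem_univ, true_and] at he ⊢
  exact ⟨he.2, by rw [tp]; simpa [Fin.rev_rev] using he.1⟩

lemma tp_tp (e : Fin p × Fin p) : tp (tp e) = e := by simp [tp, Fin.rev_rev]

lemma L2 (y : Fin p → ℂ) (hrev : ∀ i : Fin p, (i : ℕ) < p / 2 → y i.rev = -y i)
    {e : Fin p × Fin p} (he : e ∈ Hp p) :
    (y e.1 - y e.2.rev) * (y e.2 - y e.1.rev)
      = -((y e.1 + y e.2) * (y e.2.rev + y e.1.rev)) := by
  simp only [Hp, mem_filter, mem_univ, true_and] at he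
  obtain ⟨h1, h3⟩ := he
  have hv1 := e.1.isLt
  have hv2 := e.2.isLt
  rw [Fin.lt_iff_val_lt_val] at h1
  rw [Fin.lt_iff_val_lt_val, Fin.val_rev] at h3
  have ha : 2 * ((e.1 : Fin p) : ℕ) + 1 ≠ p := by omega
  rw [yrev y hrev e.1 ha]
  by_cases hb : 2 * ((e.2 : Fin p) : ℕ) + 1 = p
  · have hbb : e.2.rev = e.2 := Fin.ext (by rw [Fin.val_rev]; omega)
    rw [hbb]; ring
  · rw [yrev y hrev e.2 hb]; ring

lemma keyA (y : Fin p → ℂ) (hrev : ∀ i : Fin p, (i : ℕ) < p / 2 → y i.rev = -y i) :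
    ∏ e ∈ Ap p, (y e.1 - y e.2)
      = (-1) ^ (Hp p).card * ∏ e ∈ Ap p, (y e.1 + y e.2) := by
  rw [prod_A_split (fun e => y e.1 - y e.2), prod_A_split (fun e => y e.1 + y e.2)]
  have step1 : ∏ e ∈ Hp p, ((y e.1 - y e.2) * (y (rp e).1 - y (rp e).2))
      = ∏ e ∈ Hp p, ((y (tp e).1 - y (tp e).2) * (y (rp (tp e)).1 - y (rp (tp e)).2)) :=
    Finset.prod_nbij' tp tp (fun e he => tp_mem he) (fun e he => tp_mem he)
      (fun e _ => tp_tp e) (fun e _ => tp_tp e) (fun e _ => by rw [tp_tp])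
  rw [step1]
  have step2 : ∏ e ∈ Hp p, ((y (tp e).1 - y (tp e).2) * (y (rp (tp e)).1 - y (rp (tp e)).2))
      = ∏ e ∈ Hp p, (-1 * ((y e.1 + y e.2) * (y (rp e).1 + y (rp e).2))) := by
    refine Finset.prod_congr rfl fun e he => ?_
    have := L2 y hrev he
    simp only [tp, rp, Fin.rev_rev] at *
    rw [this]; ring
  rw [step2, Finset.prod_mul_distrib, Finset.prod_const]



def Pp (p : ℕ) : Finset (Fin p × Fin p) :=
  filter (fun pr : Fin p × Fin p => pr.1 < pr.2) univ

def Rp (p : ℕ) : Finset (Fin p × Fin p) :=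
  filter (fun pr : Fin p × Fin p => pr.1 < pr.2 ∧ pr.2 = pr.1.rev) univ

def Hf (p : ℕ) : Finset (Fin p) := filter (fun i : Fin p => (i : ℕ) < p / 2) univ

lemma half_iff' (i : Fin p) : (i : ℕ) < p / 2 ↔ i < i.rev := by
  have := i.isLt
  rw [Fin.lt_iff_val_lt_val, Fin.val_rev]
  omega

lemma prod_Rp (f : Fin p × Fin p → ℂ) :
    ∏ e ∈ Rp p, f e = ∏ i ∈ Hf p, f (i, i.rev) := by
  refine Finset.prod_nbij' (fun e => e.1) (fun i => (i, i.rev)) ?_ ?_ ?_ ?_ ?_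
  · intro e he
    simp only [Rp, mem_filter, mem_univ, true_and] at he
    simp only [Hf, mem_filter, mem_univ, true_and, half_iff']
    rw [← he.2]; exact he.1
  · intro i hi
    simp only [Hf, mem_filter, mem_univ, true_and, half_iff'] at hi
    simp only [Rp, mem_filter, mem_univ, true_and]
    exact ⟨hi, trivial⟩
  · intro e he
    simp only [Rp, mem_filter, mem_univ, true_and] at he
    exact Prod.ext rfl he.2.symm
  · intro i _; rfl
  · intro e he
    simp only [Rp, mem_filter, mem_univ, true_and] at he
    rw [← he.2]

lemma card_Rp : (Rp p).card = (Hf p).card :=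
  Finset.card_nbij' (fun e => e.1) (fun i => (i, i.rev))
    (by intro e he
        simp only [Finset.mem_coe, Rp, mem_filter, mem_univ, true_and] at he
        simp only [Finset.mem_coe, Hf, mem_filter, mem_univ, true_and, half_iff']
        rw [← he.2]; exact he.1)
    (by intro i hi
        simp only [Finset.mem_coe, Hf, mem_filter, mem_univ, true_and, half_iff'] at hi
        simp only [Finset.mem_coe, Rp, mem_filter, mem_univ, true_and]
        exact ⟨hi, trivial⟩)
    (by intro e he
        simp only [Finset.mem_coe, Rp, mem_filter, mem_univ, true_and] at he
        exact Prod.ext rfl he.2.symm)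
    (by intro i _; rfl)

lemma prod_P_split (f : Fin p × Fin p → ℂ) :
    ∏ e ∈ Pp p, f e = (∏ e ∈ Rp p, f e) * ∏ e ∈ Ap p, f e := by
  rw [← Finset.prod_filter_mul_prod_filter_not (Pp p) (fun pr => pr.2 = pr.1.rev) f]
  congr 1 <;> · congr 1; rw [Pp, Finset.filter_filter]; rfl

lemma card_P_split : (Pp p).card = (Rp p).card + (Ap p).card := by
  rw [← Finset.card_filter_add_card_filter_not (s := Pp p)
    (p := fun pr : Fin p × Fin p => pr.2 = pr.1.rev)]
  congr 2 <;> · rw [Pp, Finset.filter_filter]; rfl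

lemma offDiag_eq : (univ : Finset (Fin p)).offDiag
    = filter (fun pr : Fin p × Fin p => pr.1 ≠ pr.2) univ := by
  ext e; simp [Finset.mem_offDiag]

def Pgt (p : ℕ) : Finset (Fin p × Fin p) :=
  filter (fun pr : Fin p × Fin p => pr.2 < pr.1) univ

lemma prod_offDiag (f : Fin p × Fin p → ℂ) :
    ∏ e ∈ (univ : Finset (Fin p)).offDiag, f e
      = (∏ e ∈ Pp p, f e) * ∏ e ∈ Pp p, f (e.2, e.1) := by
  rw [offDiag_eq,
    ← Finset.prod_filter_mul_prod_filter_not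
      (filter (fun pr : Fin p × Fin p => pr.1 ≠ pr.2) univ) (fun pr => pr.1 < pr.2) f]
  congr 1
  · congr 1
    rw [Finset.filter_filter]
    apply Finset.filter_congr
    intro e _
    constructor
    · rintro ⟨_, h⟩; exact h
    · intro h; exact ⟨ne_of_lt h, h⟩
  · have : filter (fun pr : Fin p × Fin p => ¬pr.1 < pr.2)
        (filter (fun pr : Fin p × Fin p => pr.1 ≠ pr.2) univ) = Pgt p := by
      rw [Finset.filter_filter]
      apply Finset.filter_congr
      intro e _
      constructor
      · rintro ⟨h1, h2⟩; exact lt_of_le_of_ne (not_lt.mp h2) h1.symm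
      · intro h; exact ⟨(ne_of_lt h).symm, not_lt_of_gt h⟩
    rw [this]
    exact Finset.prod_nbij' Prod.swap Prod.swap
      (by intro e he; simp only [Pgt, Pp, mem_filter, mem_univ, true_and] at *; exact he)
      (by intro e he; simp only [Pgt, Pp, mem_filter, mem_univ, true_and] at *; exact he)
      (fun e _ => rfl) (fun e _ => rfl) (fun e _ => rfl)

lemma card_Pgt : (Pgt p).card = (Pp p).card :=
  Finset.card_nbij' Prod.swap Prod.swap
    (by intro e he; simp only [Finset.mem_coe, Pgt, Pp, mem_filter, mem_univ, true_and] at *; exact he)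
    (by intro e he; simp only [Finset.mem_coe, Pgt, Pp, mem_filter, mem_univ, true_and] at *; exact he)
    (fun e _ => rfl) (fun e _ => rfl)

lemma card_P2 : 2 * (Pp p).card = p * p - p := by
  have h1 : ((univ : Finset (Fin p)).offDiag).card = p * p - p := by
    rw [Finset.offDiag_card]; simp
  have h2 : ((univ : Finset (Fin p)).offDiag).card = (Pp p).card + (Pgt p).card := by
    rw [offDiag_eq, ← Finset.card_filter_add_card_filter_not
      (p := fun pr : Fin p × Fin p => pr.1 < pr.2)]
    congr 1
    · rw [Finset.filter_filter]
      congr 1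
      apply Finset.filter_congr
      intro e _
      constructor
      · rintro ⟨_, h⟩; exact h
      · intro h; exact ⟨ne_of_lt h, h⟩
    · rw [Finset.filter_filter]
      congr 1
      apply Finset.filter_congr
      intro e _
      constructor
      · rintro ⟨h1, h2⟩; exact lt_of_le_of_ne (not_lt.mp h2) h1.symm
      · intro h; exact ⟨(ne_of_lt h).symm, not_lt_of_gt h⟩
  have h3 := card_Pgt (p := p)
  omega
lemma prod_offDiag_sub (y : Fin p → ℂ) :
    ∏ pr ∈ (univ : Finset (Fin p)).offDiag, (y pr.1 - y pr.2)
      = (-1) ^ (Pp p).card *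
        ((∏ e ∈ Pp p, (y e.1 - y e.2)) * ∏ e ∈ Pp p, (y e.1 - y e.2)) := by
  rw [prod_offDiag (fun e => y e.1 - y e.2)]
  rw [show (∏ e ∈ Pp p, ((fun e : Fin p × Fin p => y e.1 - y e.2) (e.2, e.1)))
      = ∏ e ∈ Pp p, (-1 * (y e.1 - y e.2)) from Finset.prod_congr rfl (fun e _ => by ring)]
  rw [Finset.prod_mul_distrib, Finset.prod_const]
  ring

lemma prod_P_eq (hp : 1 ≤ p) (y : Fin p → ℂ)
    (hrev : ∀ i : Fin p, (i : ℕ) < p / 2 → y i.rev = -y i) :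
    ∏ e ∈ Pp p, (y e.1 - y e.2)
      = ((-1) ^ (p / 2) * ∏ i ∈ Hf p, (y i.rev - y i)) *
        ((-1) ^ (Hp p).card * ∏ e ∈ Ap p, (y e.1 + y e.2)) := by
  rw [prod_P_split (fun e => y e.1 - y e.2), keyA y hrev]
  congr 1
  rw [prod_Rp (fun e => y e.1 - y e.2)]
  rw [show (∏ i ∈ Hf p, ((fun e : Fin p × Fin p => y e.1 - y e.2) (i, i.rev)))
      = ∏ i ∈ Hf p, (-1 * (y i.rev - y i)) from Finset.prod_congr rfl (fun i _ => by ring)]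
  rw [Finset.prod_mul_distrib, Finset.prod_const]
  congr 2
  exact card_Hf hp

end S3

/-- Let `p ≥ 1` and let `y_1,…,y_p` be purely imaginary complex numbers with
`y_{p+1−k} = −y_k` for `1 ≤ k ≤ ⌊p/2⌋` (in 0-based indexing the partner of `i` is
`Fin.rev i = p−1−i`), pairwise distinct and with `y_j + y_k ≠ 0` for all `j < k` with
`k ≠ p+1−j`. Then:
(a) `∏_{j≠k}(y_j−y_k) / ∏_{j<k, k≠p+1−j}(y_j+y_k) = T*_p(y)`;
(b) for every `s` with `Re(s) > 0` all denominators of `T_{p,s}(y)` are nonzero and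
`s^{⌊p/2⌋}·T_{p,s}(y) = T*_p(y)`;
(c) for every `s` with `Re(s) > 0` all denominators of `Q_{p,s}(y)` are nonzero, and
`s^{⌊p/2⌋}·Q_{p,s}(y) → T*_p(y)` as `s → 0` with `Re(s) > 0`. -/
theorem statement3 (p : ℕ) (hp : 1 ≤ p) (y : Fin p → ℂ)
    (himg : ∀ j, (y j).re = 0)
    (hrev : ∀ i : Fin p, (i : ℕ) < p / 2 → y i.rev = -y i)
    (hinj : Function.Injective y)
    (hden : ∀ i j : Fin p, i < j → j ≠ i.rev → y i + y j ≠ 0) :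
    let ε : ℕ := (p * (p - 1) / 2 - p / 2) / 2
    let Tstar : ℂ :=
      (-1) ^ ε *
        ((∏ pr ∈ Finset.filter (fun pr : Fin p × Fin p => pr.1 < pr.2) univ,
            (y pr.1 - y pr.2)) *
          ∏ i ∈ Finset.filter (fun i : Fin p => (i : ℕ) < p / 2) univ, (y i.rev - y i))
    -- (a)
    ((∏ pr ∈ (univ : Finset (Fin p)).offDiag, (y pr.1 - y pr.2)) /
        (∏ pr ∈ Finset.filter
            (fun pr : Fin p × Fin p => pr.1 < pr.2 ∧ pr.2 ≠ pr.1.rev) univ,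
          (y pr.1 + y pr.2)) = Tstar) ∧
    -- (b)
    (∀ s : ℂ, 0 < s.re →
      (∀ i : Fin p, (i : ℕ) < p / 2 → (y i + s / 2) + (y i.rev + s / 2) ≠ 0) ∧
      s ^ (p / 2) *
          ((-1) ^ ε *
            (((∏ pr ∈ Finset.filter (fun pr : Fin p × Fin p => pr.1 < pr.2) univ,
                  ((y pr.1 + s / 2) - (y pr.2 + s / 2))) *
                ∏ i ∈ Finset.filter (fun i : Fin p => (i : ℕ) < p / 2) univ,
                  ((y i.rev + s / 2) - (y i + s / 2))) /
              ∏ i ∈ Finset.filter (fun i : Fin p => (i : ℕ) < p / 2) univ,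
                ((y i + s / 2) + (y i.rev + s / 2)))) = Tstar) ∧
    -- (c)
    (∀ s : ℂ, 0 < s.re →
      ∀ i j : Fin p, i < j → (y i + s / 2) + (y j + s / 2) ≠ 0) ∧
    Tendsto
      (fun s : ℂ =>
        s ^ (p / 2) *
          ((∏ pr ∈ (univ : Finset (Fin p)).offDiag, ((y pr.1 + s / 2) - (y pr.2 + s / 2))) /
            ∏ pr ∈ Finset.filter (fun pr : Fin p × Fin p => pr.1 < pr.2) univ,
              ((y pr.1 + s / 2) + (y pr.2 + s / 2))))
      (nhdsWithin 0 {s : ℂ | 0 < s.re}) (nhds Tstar) := by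
  intro ε Tstar
  have hS0 : (∏ e ∈ S3.Ap p, (y e.1 + y e.2)) ≠ 0 := by
    rw [Finset.prod_ne_zero_iff]
    intro e he
    simp only [S3.Ap, mem_filter, mem_univ, true_and] at he
    exact hden e.1 e.2 he.1 he.2
  have hG0 : (∏ i ∈ S3.Hf p, (y i.rev - y i)) ≠ 0 := by
    rw [Finset.prod_ne_zero_iff]
    intro i hi
    simp only [S3.Hf, mem_filter, mem_univ, true_and, S3.half_iff'] at hi
    exact sub_ne_zero.mpr fun hc => (ne_of_lt hi) (hinj hc).symm
  have h6 : p * (p - 1) = p * p - p := by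
    cases p with
    | zero => rfl
    | succ n =>
      have : (n + 1) * (n + 1) = (n + 1) * n + (n + 1) := by ring
      simp only [Nat.succ_sub_one]
      omega
  have hcards : (S3.Pp p).card = p / 2 + 2 * (S3.Hp p).card := by
    have h2 := S3.card_P_split (p := p)
    have h3 := S3.card_Rp (p := p)
    have h4 := S3.card_A_split (p := p)
    have h5 := S3.card_Hf (p := p) hp
    have h5' : (S3.Hf p).card = p / 2 := h5
    omega
  have hcard : ε = (S3.Hp p).card := by
    have h1 := S3.card_P2 (p := p)
    show (p * (p - 1) / 2 - p / 2) / 2 = (S3.Hp p).card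
    omega
  have hT0 : Tstar = (-1) ^ ε *
      ((∏ e ∈ S3.Pp p, (y e.1 - y e.2)) * ∏ i ∈ S3.Hf p, (y i.rev - y i)) := rfl
  have hsign : ((-1 : ℂ)) ^ (S3.Pp p).card * (-1) ^ (p / 2) = 1 := by
    rw [← pow_add, show (S3.Pp p).card + p / 2 = 2 * ((S3.Hp p).card + p / 2) by omega,
      pow_mul]
    norm_num
  have parta : (∏ pr ∈ (univ : Finset (Fin p)).offDiag, (y pr.1 - y pr.2)) /
      (∏ pr ∈ Finset.filter
          (fun pr : Fin p × Fin p => pr.1 < pr.2 ∧ pr.2 ≠ pr.1.rev) univ,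
        (y pr.1 + y pr.2)) = Tstar := by
    rw [show Finset.filter (fun pr : Fin p × Fin p => pr.1 < pr.2 ∧ pr.2 ≠ pr.1.rev) univ
        = S3.Ap p from rfl]
    rw [div_eq_iff hS0, hT0, hcard, S3.prod_offDiag_sub y, S3.prod_P_eq hp y hrev]
    linear_combination (((-1 : ℂ)) ^ (p / 2) * ((-1) ^ (S3.Hp p).card) ^ 2 *
      (∏ i ∈ S3.Hf p, (y i.rev - y i)) ^ 2 * (∏ e ∈ S3.Ap p, (y e.1 + y e.2)) ^ 2) * hsign
  refine ⟨parta, ?_, ?_, ?_⟩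
  · intro s hs
    have hs0 : s ≠ 0 := by intro h; rw [h] at hs; simp at hs
    have hb1 : ∀ i : Fin p, (i : ℕ) < p / 2 → (y i + s / 2) + (y i.rev + s / 2) ≠ 0 := by
      intro i hi hc
      rw [hrev i hi] at hc
      exact hs0 (by linear_combination hc)
    refine ⟨hb1, ?_⟩
    have hA1 : ∏ pr ∈ Finset.filter (fun pr : Fin p × Fin p => pr.1 < pr.2) univ,
        ((y pr.1 + s / 2) - (y pr.2 + s / 2)) = ∏ e ∈ S3.Pp p, (y e.1 - y e.2) :=
      Finset.prod_congr rfl fun e _ => by ring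
    have hA2 : ∏ i ∈ Finset.filter (fun i : Fin p => (i : ℕ) < p / 2) univ,
        ((y i.rev + s / 2) - (y i + s / 2)) = ∏ i ∈ S3.Hf p, (y i.rev - y i) :=
      Finset.prod_congr rfl fun i _ => by ring
    have hA3 : ∏ i ∈ Finset.filter (fun i : Fin p => (i : ℕ) < p / 2) univ,
        ((y i + s / 2) + (y i.rev + s / 2)) = s ^ (p / 2) := by
      rw [show (∏ i ∈ Finset.filter (fun i : Fin p => (i : ℕ) < p / 2) univ,
            ((y i + s / 2) + (y i.rev + s / 2)))
          = ∏ i ∈ Finset.filter (fun i : Fin p => (i : ℕ) < p / 2) univ, s from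
        Finset.prod_congr rfl fun i hi => by
          rw [hrev i (by simpa using (Finset.mem_filter.mp hi).2)]; ring]
      rw [Finset.prod_const, S3.card_Hf hp]
    rw [hA1, hA2, hA3, hT0]
    have hsp : (s : ℂ) ^ (p / 2) ≠ 0 := pow_ne_zero _ hs0
    field_simp
  · intro s hs i j _ hc
    have hre : ((y i + s / 2) + (y j + s / 2)).re = s.re := by
      rw [show (y i + s / 2) + (y j + s / 2) = y i + y j + s by ring]
      simp [Complex.add_re, himg]
    rw [hc] at hre
    simp at hre
    linarith [hre ▸ hs]
  · have parta' : (∏ pr ∈ (univ : Finset (Fin p)).offDiag, (y pr.1 - y pr.2)) /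
        (∏ e ∈ S3.Ap p, (y e.1 + y e.2)) = Tstar := parta
    have key : ∀ s : ℂ, s ≠ 0 →
        s ^ (p / 2) *
          ((∏ pr ∈ (univ : Finset (Fin p)).offDiag, ((y pr.1 + s / 2) - (y pr.2 + s / 2))) /
            ∏ pr ∈ Finset.filter (fun pr : Fin p × Fin p => pr.1 < pr.2) univ,
              ((y pr.1 + s / 2) + (y pr.2 + s / 2)))
        = (∏ pr ∈ (univ : Finset (Fin p)).offDiag, (y pr.1 - y pr.2)) /
            ∏ e ∈ S3.Ap p, (y e.1 + y e.2 + s) := by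
      intro s hs0
      have h1 : ∏ pr ∈ (univ : Finset (Fin p)).offDiag, ((y pr.1 + s / 2) - (y pr.2 + s / 2))
          = ∏ pr ∈ (univ : Finset (Fin p)).offDiag, (y pr.1 - y pr.2) :=
        Finset.prod_congr rfl fun e _ => by ring
      have h2 : ∏ pr ∈ Finset.filter (fun pr : Fin p × Fin p => pr.1 < pr.2) univ,
          ((y pr.1 + s / 2) + (y pr.2 + s / 2))
          = s ^ (p / 2) * ∏ e ∈ S3.Ap p, (y e.1 + y e.2 + s) := by
        calc ∏ pr ∈ Finset.filter (fun pr : Fin p × Fin p => pr.1 < pr.2) univ,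
            ((y pr.1 + s / 2) + (y pr.2 + s / 2))
            = ∏ e ∈ S3.Pp p, (y e.1 + y e.2 + s) :=
              Finset.prod_congr rfl fun e _ => by ring
          _ = (∏ e ∈ S3.Rp p, (y e.1 + y e.2 + s)) * ∏ e ∈ S3.Ap p, (y e.1 + y e.2 + s) :=
              S3.prod_P_split _
          _ = s ^ (p / 2) * ∏ e ∈ S3.Ap p, (y e.1 + y e.2 + s) := by
              congr 1
              rw [S3.prod_Rp (fun e => y e.1 + y e.2 + s)]
              rw [show (∏ i ∈ S3.Hf p,
                    ((fun e : Fin p × Fin p => y e.1 + y e.2 + s) (i, i.rev)))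
                  = ∏ i ∈ S3.Hf p, s from
                Finset.prod_congr rfl fun i hi => by
                  show y i + y i.rev + s = s
                  rw [hrev i (by simpa [S3.Hf] using (Finset.mem_filter.mp hi).2)]; ring]
              rw [Finset.prod_const]
              congr 1
              exact S3.card_Hf hp
      rw [h1, h2, ← mul_div_assoc, mul_div_mul_left _ _ (pow_ne_zero _ hs0)]
    have hc : Continuous fun s : ℂ => ∏ e ∈ S3.Ap p, (y e.1 + y e.2 + s) := by
      apply continuous_finset_prod
      intro e _
      fun_prop
    have hdent : Tendsto (fun s : ℂ => ∏ e ∈ S3.Ap p, (y e.1 + y e.2 + s)) (nhds 0)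
        (nhds (∏ e ∈ S3.Ap p, (y e.1 + y e.2))) := by
      have := hc.tendsto 0
      simpa using this
    have hg : Tendsto (fun s : ℂ =>
        (∏ pr ∈ (univ : Finset (Fin p)).offDiag, (y pr.1 - y pr.2)) /
          ∏ e ∈ S3.Ap p, (y e.1 + y e.2 + s)) (nhdsWithin 0 {s : ℂ | 0 < s.re})
        (nhds Tstar) := by
      rw [← parta']
      exact (Tendsto.div tendsto_const_nhds hdent hS0).mono_left nhdsWithin_le_nhds
    refine hg.congr' ?_
    refine eventually_mem_nhdsWithin.mono fun s hs => ?_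
    have hs' : 0 < s.re := hs
    exact (key s (fun h0 => by rw [h0] at hs'; simp at hs')).symm
end
end

section
/- Let n ≥ 1 and let R be a commutative ring. Let J ∈ M_{n+1}(R) be the matrix with J_{a,a+1} = 1 for 1 ≤ a ≤ n and all other entries 0, and let 𝔫'_{n+1}(R) = {Y ∈ M_{n+1}(R) : Y_{ab} = 0 whenever b ≤ a+1}. For an upper unitriangular matrix u ∈ M_n(R) (that is, u_{aa} = 1 for all a and u_{ab} = 0 for a > b), let ũ ∈ GL_{n+1}(R) denote the block-diagonal matrix diag(u,1). Then the map u ↦ ũ·J·ũ^{−1} is a bijection from the group of upper unitriangular n×n matrices over R onto the set J + 𝔫'_{n+1}(R). -/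
noncomputable section

namespace Stmt11

variable (n : ℕ) (R : Type*) [CommRing R]

/-- The matrix `J ∈ M_{n+1}(R)` with `J_{a,a+1} = 1` for `1 ≤ a ≤ n` (1-based) and all other
entries `0`, i.e. ones exactly on the superdiagonal. -/
def J : Matrix (Fin (n + 1)) (Fin (n + 1)) R :=
  Matrix.of fun a b => if (b : ℕ) = (a : ℕ) + 1 then 1 else 0

/-- The block-diagonal embedding `u ↦ ũ = diag(u, 1)` of `M_n(R)` into `M_{n+1}(R)`. -/
def emb (u : Matrix (Fin n) (Fin n) R) : Matrix (Fin (n + 1)) (Fin (n + 1)) R :=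
  Matrix.of fun i j =>
    if hi : (i : ℕ) < n then
      if hj : (j : ℕ) < n then u ⟨i, hi⟩ ⟨j, hj⟩ else 0
    else if (j : ℕ) < n then 0 else 1

section Aux

variable {m : ℕ} {S : Type*} [CommRing S]

/-- entries vanish unless `b ≥ a + k`. -/
def UT (k : ℕ) (X : Matrix (Fin (m + 1)) (Fin (m + 1)) S) : Prop :=
  ∀ a b : Fin (m + 1), (b : ℕ) < (a : ℕ) + k → X a b = 0

lemma ut_mono {j k : ℕ} (h : j ≤ k) {X : Matrix (Fin (m + 1)) (Fin (m + 1)) S}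
    (hX : UT k X) : UT j X := fun a b hb => hX a b (by omega)

lemma ut_zero (k : ℕ) : UT k (0 : Matrix (Fin (m + 1)) (Fin (m + 1)) S) :=
  fun _ _ _ => rfl

lemma ut_one : UT 0 (1 : Matrix (Fin (m + 1)) (Fin (m + 1)) S) := by
  intro a b hb
  exact Matrix.one_apply_ne (by intro h; subst h; omega)

lemma ut_add {k : ℕ} {X Y : Matrix (Fin (m + 1)) (Fin (m + 1)) S}
    (hX : UT k X) (hY : UT k Y) : UT k (X + Y) := by
  intro a b hb
  simp [Matrix.add_apply, hX a b hb, hY a b hb]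

lemma ut_neg {k : ℕ} {X : Matrix (Fin (m + 1)) (Fin (m + 1)) S}
    (hX : UT k X) : UT k (-X) := by
  intro a b hb
  simp [Matrix.neg_apply, hX a b hb]

lemma ut_sum {k : ℕ} {ι : Type*} {s : Finset ι} {f : ι → Matrix (Fin (m + 1)) (Fin (m + 1)) S}
    (h : ∀ i ∈ s, UT k (f i)) : UT k (∑ i ∈ s, f i) := by
  intro a b hb
  rw [Matrix.sum_apply]
  exact Finset.sum_eq_zero fun i hi => h i hi a b hb

lemma ut_mul {j k : ℕ} {X Y : Matrix (Fin (m + 1)) (Fin (m + 1)) S}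
    (hX : UT j X) (hY : UT k Y) : UT (j + k) (X * Y) := by
  intro a b hb
  rw [Matrix.mul_apply]
  apply Finset.sum_eq_zero
  intro c _
  by_cases h : (c : ℕ) < (a : ℕ) + j
  · rw [hX a c h, zero_mul]
  · rw [hY c b (by omega), mul_zero]

lemma ut_mul' {j k l : ℕ} {X Y : Matrix (Fin (m + 1)) (Fin (m + 1)) S}
    (hX : UT j X) (hY : UT k Y) (hl : l ≤ j + k) : UT l (X * Y) :=
  ut_mono hl (ut_mul hX hY)

lemma ut_pow {X : Matrix (Fin (m + 1)) (Fin (m + 1)) S} (hX : UT 1 X) :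
    ∀ k, UT k (X ^ k) := by
  intro k
  induction k with
  | zero => simpa using ut_one
  | succ k ih => rw [pow_succ]; exact ut_mul ih hX

lemma ut_eq_zero {X : Matrix (Fin (m + 1)) (Fin (m + 1)) S} (hX : UT (m + 1) X) :
    X = 0 := by
  ext a b
  have := b.isLt
  simpa using hX a b (by omega)

lemma J_apply (a b : Fin (m + 1)) :
    J m S a b = if (b : ℕ) = (a : ℕ) + 1 then 1 else 0 := rfl

lemma ut_J : UT 1 (J m S) := by
  intro a b hb
  rw [J_apply, if_neg]; omega

lemma J_mul (X : Matrix (Fin (m + 1)) (Fin (m + 1)) S) (a b : Fin (m + 1)) :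
    (J m S * X) a b = if h : (a : ℕ) + 1 ≤ m then X ⟨(a : ℕ) + 1, by omega⟩ b else 0 := by
  rw [Matrix.mul_apply]
  split_ifs with h
  · rw [Finset.sum_eq_single (⟨(a : ℕ) + 1, by omega⟩ : Fin (m + 1))]
    · rw [J_apply, if_pos rfl, one_mul]
    · intro c _ hc
      rw [J_apply, if_neg, zero_mul]
      intro hcc
      exact hc (Fin.ext hcc)
    · simp
  · apply Finset.sum_eq_zero
    intro c _
    have := c.isLt
    rw [J_apply, if_neg (by omega), zero_mul]

lemma mul_J (X : Matrix (Fin (m + 1)) (Fin (m + 1)) S) (a b : Fin (m + 1)) :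
    (X * J m S) a b = if h : 1 ≤ (b : ℕ) then X a ⟨(b : ℕ) - 1, by omega⟩ else 0 := by
  rw [Matrix.mul_apply]
  split_ifs with h
  · rw [Finset.sum_eq_single (⟨(b : ℕ) - 1, by omega⟩ : Fin (m + 1))]
    · rw [J_apply, if_pos (by simp; omega), mul_one]
    · intro c _ hc
      rw [J_apply, if_neg, mul_zero]
      intro hcc
      apply hc
      apply Fin.ext
      simp at hcc ⊢
      omega
    · simp
  · apply Finset.sum_eq_zero
    intro c _
    rw [J_apply, if_neg (by omega), mul_zero]

lemma J_pow (k : ℕ) (a b : Fin (m + 1)) :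
    ((J m S) ^ k) a b = if (b : ℕ) = (a : ℕ) + k then 1 else 0 := by
  induction k generalizing a b with
  | zero =>
    rw [pow_zero, Matrix.one_apply]
    congr 1
    simp [Fin.ext_iff]
    omega
  | succ k ih =>
    rw [pow_succ', J_mul]
    by_cases h : (a : ℕ) + 1 ≤ m
    · rw [dif_pos h, ih]
      apply if_congr (by simp only [Fin.val_mk]; omega) rfl rfl
    · rw [dif_neg h, if_neg]
      have := b.isLt
      omega

lemma ut_J_pow (k : ℕ) : UT k ((J m S) ^ k) := by
  intro a b hb
  rw [J_pow, if_neg (by omega)]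

section Emb

variable {u : Matrix (Fin m) (Fin m) S}

lemma emb_lower (hu0 : ∀ a b : Fin m, b < a → u a b = 0)
    {a b : Fin (m + 1)} (h : (b : ℕ) < (a : ℕ)) :
    emb m S u a b = 0 := by
  have hb := b.isLt
  simp only [emb, Matrix.of_apply]
  by_cases hi : (a : ℕ) < m
  · rw [dif_pos hi, dif_pos (by omega)]
    exact hu0 _ _ h
  · rw [dif_neg hi, if_pos (by omega)]

lemma emb_diag (hu1 : ∀ a, u a a = 1) {a b : Fin (m + 1)} (h : (b : ℕ) = (a : ℕ)) :
    emb m S u a b = 1 := by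
  simp only [emb, Matrix.of_apply]
  by_cases hi : (a : ℕ) < m
  · rw [dif_pos hi, dif_pos (by omega)]
    have : (⟨(b : ℕ), by omega⟩ : Fin m) = ⟨(a : ℕ), hi⟩ := by simp [Fin.ext_iff, h]
    rw [this]
    exact hu1 _
  · rw [dif_neg hi, if_neg (by omega)]

lemma emb_lastcol {a b : Fin (m + 1)} (h : (b : ℕ) = m) :
    emb m S u a b = if (a : ℕ) = m then 1 else 0 := by
  simp only [emb, Matrix.of_apply]
  by_cases hi : (a : ℕ) < m
  · rw [dif_pos hi, dif_neg (by omega), if_neg (by omega)]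
  · have := a.isLt
    rw [dif_neg hi, if_neg (by omega), if_pos (by omega)]

lemma emb_lastrow {a b : Fin (m + 1)} (h : (a : ℕ) = m) :
    emb m S u a b = if (b : ℕ) = m then 1 else 0 := by
  have hb := b.isLt
  simp only [emb, Matrix.of_apply]
  rw [dif_neg (by omega)]
  by_cases hj : (b : ℕ) < m
  · rw [if_pos hj, if_neg (by omega)]
  · rw [if_neg hj, if_pos (by omega)]

lemma ut_N (hu1 : ∀ a, u a a = 1) (hu0 : ∀ a b : Fin m, b < a → u a b = 0) :
    UT 1 (emb m S u - 1) := by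
  intro a b hb
  rw [Matrix.sub_apply]
  rcases eq_or_ne ((b : ℕ)) ((a : ℕ)) with h | h
  · have hba : b = a := Fin.ext h
    subst hba
    rw [emb_diag hu1 rfl, Matrix.one_apply_eq, sub_self]
  · rw [emb_lower hu0 (by omega), Matrix.one_apply_ne, sub_zero]
    exact fun he => h (congrArg Fin.val he.symm)

lemma N_lastcol (a : Fin (m + 1)) :
    (emb m S u - 1) a (Fin.last m) = 0 := by
  rw [Matrix.sub_apply, emb_lastcol (Fin.val_last m), Matrix.one_apply]
  by_cases h : (a : ℕ) = m
  · rw [if_pos h, if_pos (Fin.ext (by simp [h])), sub_self]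
  · rw [if_neg h, if_neg (by simp [Fin.ext_iff]; omega), sub_zero]

end Emb

/-- inverse of `1 + X` for `X` strictly upper triangular -/
def geomInv (X : Matrix (Fin (m + 1)) (Fin (m + 1)) S) : Matrix (Fin (m + 1)) (Fin (m + 1)) S :=
  ∑ i ∈ Finset.range (m + 1), (-X) ^ i

lemma negpow_zero {X : Matrix (Fin (m + 1)) (Fin (m + 1)) S} (hX : UT 1 X) :
    (-X) ^ (m + 1) = 0 :=
  ut_eq_zero (ut_pow (ut_neg hX) (m + 1))

lemma mul_geomInv {X : Matrix (Fin (m + 1)) (Fin (m + 1)) S} (hX : UT 1 X) :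
    (1 + X) * geomInv X = 1 := by
  have h := mul_neg_geom_sum (-X) (m + 1)
  rw [sub_neg_eq_add, negpow_zero hX, sub_zero] at h
  exact h

lemma geomInv_mul {X : Matrix (Fin (m + 1)) (Fin (m + 1)) S} (hX : UT 1 X) :
    geomInv X * (1 + X) = 1 := by
  have h := geom_sum_mul_neg (-X) (m + 1)
  rw [sub_neg_eq_add, negpow_zero hX, sub_zero] at h
  exact h

lemma ut_geomInv_sub_one {X : Matrix (Fin (m + 1)) (Fin (m + 1)) S} (hX : UT 1 X) :
    UT 1 (geomInv X - 1) := by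
  have h : geomInv X - 1 = ∑ i ∈ Finset.range m, (-X) ^ (i + 1) := by
    rw [geomInv, Finset.sum_range_succ']
    simp
  rw [h]
  exact ut_sum fun i _ => ut_mono (by omega) (ut_pow (ut_neg hX) (i + 1))

lemma pow_lastcol_zero {X : Matrix (Fin (m + 1)) (Fin (m + 1)) S}
    (h : ∀ a, X a (Fin.last m) = 0) (i : ℕ) (a : Fin (m + 1)) :
    (X ^ (i + 1)) a (Fin.last m) = 0 := by
  rw [pow_succ, Matrix.mul_apply]
  apply Finset.sum_eq_zero
  intro c _
  rw [h c, mul_zero]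

lemma geomInv_lastcol {X : Matrix (Fin (m + 1)) (Fin (m + 1)) S}
    (h : ∀ a, X a (Fin.last m) = 0) (a : Fin (m + 1)) :
    geomInv X a (Fin.last m) = (1 : Matrix (Fin (m + 1)) (Fin (m + 1)) S) a (Fin.last m) := by
  rw [geomInv, Finset.sum_range_succ', Matrix.add_apply, Matrix.sum_apply]
  rw [Finset.sum_eq_zero, zero_add, pow_zero]
  intro i _
  exact pow_lastcol_zero (fun c => by rw [Matrix.neg_apply, h c, neg_zero]) i a

lemma comm_eq_one {w : Matrix (Fin (m + 1)) (Fin (m + 1)) S}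
    (hcomm : w * J m S = J m S * w)
    (hrow : ∀ b, w (Fin.last m) b = (1 : Matrix (Fin (m + 1)) (Fin (m + 1)) S) (Fin.last m) b)
    (hcol : ∀ a, w a (Fin.last m) = (1 : Matrix (Fin (m + 1)) (Fin (m + 1)) S) a (Fin.last m)) :
    w = 1 := by
  have key : ∀ d (a b : Fin (m + 1)), m - max (a : ℕ) (b : ℕ) = d →
      w a b = (1 : Matrix (Fin (m + 1)) (Fin (m + 1)) S) a b := by
    intro d
    induction d with
    | zero =>
      intro a b h
      have ha := a.isLt
      have hb := b.isLt
      rcases (by omega : (a : ℕ) = m ∨ (b : ℕ) = m) with h' | h'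
      · have : a = Fin.last m := Fin.ext (by simpa using h')
        subst this
        exact hrow b
      · have : b = Fin.last m := Fin.ext (by simpa using h')
        subst this
        exact hcol a
    | succ d ih =>
      intro a b h
      have ha := a.isLt
      have hb := b.isLt
      have ha' : (a : ℕ) < m := by omega
      have hb' : (b : ℕ) < m := by omega
      have h1 := congrFun (congrFun hcomm a) ⟨(b : ℕ) + 1, by omega⟩
      rw [mul_J, J_mul, dif_pos (by simp only [Fin.val_mk]; omega), dif_pos (by omega)] at h1
      simp only [Fin.val_mk, Nat.add_sub_cancel, Fin.eta] at h1
      rw [h1, ih ⟨(a : ℕ) + 1, by omega⟩ ⟨(b : ℕ) + 1, by omega⟩ (by simp only [Fin.val_mk]; omega),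
        Matrix.one_apply, Matrix.one_apply]
      apply if_congr _ rfl rfl
      simp only [Fin.ext_iff, Fin.val_mk]
      omega
  ext a b
  exact key (m - max (a : ℕ) (b : ℕ)) a b rfl

end Aux

/-- The map `u ↦ ũ·J·ũ⁻¹` is a bijection from the group of upper unitriangular `n × n`
matrices over `R` onto the set `J + 𝔫'_{n+1}(R)`, where
`𝔫'_{n+1}(R) = {Y : Y_{ab} = 0 whenever b ≤ a + 1}` (1-based indexing). -/
theorem statement11 (hn : 1 ≤ n) :
    Set.BijOn (fun u : Matrix (Fin n) (Fin n) R => emb n R u * J n R * (emb n R u)⁻¹)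
      {u | (∀ a, u a a = 1) ∧ ∀ a b : Fin n, b < a → u a b = 0}
      {Y | ∃ Z : Matrix (Fin (n + 1)) (Fin (n + 1)) R,
        (∀ a b : Fin (n + 1), (b : ℕ) ≤ (a : ℕ) + 1 → Z a b = 0) ∧ Y = J n R + Z} := by
  classical
  refine ⟨?_, ?_, ?_⟩
  · -- MapsTo
    rintro u ⟨hu1, hu0⟩
    have hN : UT 1 (emb n R u - 1) := ut_N hu1 hu0
    have eu : (1 : Matrix (Fin (n + 1)) (Fin (n + 1)) R) + (emb n R u - 1) = emb n R u := by abel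
    have hBu1 : emb n R u * geomInv (emb n R u - 1) = 1 := by
      have := mul_geomInv hN; rwa [eu] at this
    have hiu : (emb n R u)⁻¹ = geomInv (emb n R u - 1) := Matrix.inv_eq_right_inv hBu1
    have hM : UT 1 (geomInv (emb n R u - 1) - 1) := ut_geomInv_sub_one hN
    refine ⟨emb n R u * J n R * (emb n R u)⁻¹ - J n R, ?_, by abel⟩
    intro a b hb
    have hZ : UT 2 (emb n R u * J n R * (emb n R u)⁻¹ - J n R) := by
      rw [hiu]
      have expand : emb n R u * J n R * geomInv (emb n R u - 1) - J n R
          = (emb n R u - 1) * J n R + J n R * (geomInv (emb n R u - 1) - 1)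
            + (emb n R u - 1) * (J n R * (geomInv (emb n R u - 1) - 1)) := by
        noncomm_ring
      rw [expand]
      exact ut_add (ut_add (ut_mul' hN ut_J (le_refl 2)) (ut_mul' ut_J hM (le_refl 2)))
        (ut_mul' hN (ut_mul ut_J hM) (by omega))
    exact hZ a b (by omega)
  · -- InjOn
    rintro u ⟨hu1, hu0⟩ v ⟨hv1, hv0⟩ huv
    simp only at huv
    have hNu : UT 1 (emb n R u - 1) := ut_N hu1 hu0
    have hNv : UT 1 (emb n R v - 1) := ut_N hv1 hv0
    have eu : (1 : Matrix (Fin (n + 1)) (Fin (n + 1)) R) + (emb n R u - 1) = emb n R u := by abel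
    have ev : (1 : Matrix (Fin (n + 1)) (Fin (n + 1)) R) + (emb n R v - 1) = emb n R v := by abel
    set Bu := geomInv (emb n R u - 1) with hBudef
    set Bv := geomInv (emb n R v - 1) with hBvdef
    have hBu1 : emb n R u * Bu = 1 := by have := mul_geomInv hNu; rwa [eu] at this
    have hBu2 : Bu * emb n R u = 1 := by have := geomInv_mul hNu; rwa [eu] at this
    have hBv1 : emb n R v * Bv = 1 := by have := mul_geomInv hNv; rwa [ev] at this
    have hBv2 : Bv * emb n R v = 1 := by have := geomInv_mul hNv; rwa [ev] at this
    have hiu : (emb n R u)⁻¹ = Bu := Matrix.inv_eq_right_inv hBu1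
    have hiv : (emb n R v)⁻¹ = Bv := Matrix.inv_eq_right_inv hBv1
    rw [hiu, hiv] at huv
    set w := Bv * emb n R u with hw
    have e1 : emb n R u * J n R = emb n R v * J n R * Bv * emb n R u := by
      rw [← huv, mul_assoc (emb n R u * J n R) Bu (emb n R u), hBu2, mul_one]
    have hcomm : w * J n R = J n R * w := by
      have h2 : w * J n R = Bv * (emb n R u * J n R) := by rw [hw, mul_assoc]
      rw [h2, e1]
      simp only [← mul_assoc]
      rw [hBv2, one_mul, hw, mul_assoc]
    have hMv : UT 1 (Bv - 1) := ut_geomInv_sub_one hNv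
    have hBvrow : ∀ c, Bv (Fin.last n) c
        = (1 : Matrix (Fin (n + 1)) (Fin (n + 1)) R) (Fin.last n) c := by
      intro c
      have h3 := hMv (Fin.last n) c (by have := c.isLt; simp only [Fin.val_last]; omega)
      rw [Matrix.sub_apply] at h3
      exact sub_eq_zero.mp h3
    have hrow : ∀ b, w (Fin.last n) b
        = (1 : Matrix (Fin (n + 1)) (Fin (n + 1)) R) (Fin.last n) b := by
      intro b
      rw [hw]
      calc (Bv * emb n R u) (Fin.last n) b
          = ∑ c, Bv (Fin.last n) c * emb n R u c b := Matrix.mul_apply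
        _ = ∑ c, (1 : Matrix (Fin (n + 1)) (Fin (n + 1)) R) (Fin.last n) c * emb n R u c b :=
            Finset.sum_congr rfl fun c _ => by rw [hBvrow c]
        _ = ((1 : Matrix (Fin (n + 1)) (Fin (n + 1)) R) * emb n R u) (Fin.last n) b :=
            (Matrix.mul_apply).symm
        _ = emb n R u (Fin.last n) b := by rw [one_mul]
        _ = _ := by
            rw [emb_lastrow (Fin.val_last n), Matrix.one_apply]
            apply if_congr _ rfl rfl
            simp [Fin.ext_iff, Fin.val_last, eq_comm]
    have hcol : ∀ a, w a (Fin.last n)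
        = (1 : Matrix (Fin (n + 1)) (Fin (n + 1)) R) a (Fin.last n) := by
      intro a
      rw [hw, Matrix.mul_apply, Finset.sum_eq_single (Fin.last n)]
      · rw [emb_lastcol (Fin.val_last n), if_pos (Fin.val_last n), mul_one, hBvdef]
        exact geomInv_lastcol N_lastcol a
      · intro c _ hc
        rw [emb_lastcol (Fin.val_last n), if_neg, mul_zero]
        intro hcn
        exact hc (Fin.ext (by simp [Fin.val_last, hcn]))
      · simp
    have hw1 : w = 1 := comm_eq_one hcomm hrow hcol
    have heq : emb n R u = emb n R v := by
      calc emb n R u = 1 * emb n R u := (one_mul _).symm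
        _ = emb n R v * Bv * emb n R u := by rw [hBv1]
        _ = emb n R v * w := by rw [mul_assoc, ← hw]
        _ = emb n R v := by rw [hw1, mul_one]
    ext a b
    have h2 := congrFun (congrFun heq (Fin.castSucc a)) (Fin.castSucc b)
    simpa [emb, Fin.is_lt, Fin.coe_castSucc, Fin.eta] using h2
  · -- SurjOn
    rintro Y ⟨Z, hZ, rfl⟩
    have hZ2 : UT 2 Z := fun a b h => hZ a b (by omega)
    have hpow : ∀ k, ∃ E, UT (k + 1) E ∧ (J n R + Z) ^ k = (J n R) ^ k + E := by
      intro k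
      induction k with
      | zero => exact ⟨0, ut_zero 1, by simp⟩
      | succ k ih =>
        obtain ⟨E, hE, hk⟩ := ih
        refine ⟨J n R * E + Z * (J n R) ^ k + Z * E, ?_, ?_⟩
        · exact ut_add (ut_add (ut_mul' ut_J hE (by omega)) (ut_mul' hZ2 (ut_J_pow k) (by omega)))
            (ut_mul' hZ2 hE (by omega))
        · rw [pow_succ', hk, pow_succ']
          noncomm_ring
    set W : Matrix (Fin (n + 1)) (Fin (n + 1)) R :=
      Matrix.of (fun i b => ((J n R + Z) ^ (n - (b : ℕ))) i (Fin.last n)) with hWdef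
    have hWval : ∀ i b : Fin (n + 1),
        W i b = ((J n R + Z) ^ (n - (b : ℕ))) i (Fin.last n) := by
      intro i b; rw [hWdef]; rfl
    have hkey : ∀ i b : Fin (n + 1), (b : ℕ) ≤ (i : ℕ) →
        W i b = if (b : ℕ) = (i : ℕ) then 1 else 0 := by
      intro i b hbi
      obtain ⟨E, hE, hk⟩ := hpow (n - (b : ℕ))
      have hb := b.isLt
      have hi := i.isLt
      rw [hWval, hk, Matrix.add_apply, J_pow,
        hE i (Fin.last n) (by simp only [Fin.val_last]; omega), add_zero]
      apply if_congr _ rfl rfl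
      simp only [Fin.val_last]
      omega
    have hWn : ∀ i b : Fin (n + 1), (b : ℕ) = n →
        W i b = if (i : ℕ) = n then 1 else 0 := by
      intro i b hbn
      rw [hWval, hbn, Nat.sub_self, pow_zero, Matrix.one_apply]
      apply if_congr _ rfl rfl
      simp [Fin.ext_iff, Fin.val_last]
    set u : Matrix (Fin n) (Fin n) R :=
      Matrix.of (fun i j : Fin n => W (Fin.castSucc i) (Fin.castSucc j)) with hudef
    have hu1 : ∀ a : Fin n, u a a = 1 := by
      intro a
      rw [hudef]
      show W (Fin.castSucc a) (Fin.castSucc a) = 1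
      rw [hkey _ _ (le_refl _), if_pos rfl]
    have hu0 : ∀ a b : Fin n, b < a → u a b = 0 := by
      intro a b hba
      rw [hudef]
      show W (Fin.castSucc a) (Fin.castSucc b) = 0
      rw [hkey _ _ (by simp only [Fin.coe_castSucc]; omega),
        if_neg (by simp only [Fin.coe_castSucc]; omega)]
    have hWemb : W = emb n R u := by
      ext i b
      simp only [emb, Matrix.of_apply]
      by_cases hi : (i : ℕ) < n
      · rw [dif_pos hi]
        by_cases hb : (b : ℕ) < n
        · rw [dif_pos hb, hudef]
          show W i b = W (Fin.castSucc ⟨(i : ℕ), hi⟩) (Fin.castSucc ⟨(b : ℕ), hb⟩)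
          have e1 : Fin.castSucc (⟨(i : ℕ), hi⟩ : Fin n) = i := Fin.ext (by simp)
          have e2 : Fin.castSucc (⟨(b : ℕ), hb⟩ : Fin n) = b := Fin.ext (by simp)
          rw [e1, e2]
        · have hbn : (b : ℕ) = n := by have := b.isLt; omega
          rw [dif_neg hb, hWn i b hbn, if_neg (by omega)]
      · have hin : (i : ℕ) = n := by have := i.isLt; omega
        rw [dif_neg hi]
        by_cases hb : (b : ℕ) < n
        · rw [if_pos hb, hkey i b (by omega), if_neg (by omega)]
        · have hbn : (b : ℕ) = n := by have := b.isLt; omega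
          rw [if_neg hb, hWn i b hbn, if_pos hin]
    have hYW : (J n R + Z) * W = W * J n R := by
      ext i b
      have hb := b.isLt
      have lhs : ((J n R + Z) * W) i b
          = ((J n R + Z) ^ ((n - (b : ℕ)) + 1)) i (Fin.last n) := by
        rw [pow_succ', Matrix.mul_apply, Matrix.mul_apply]
        exact Finset.sum_congr rfl fun c _ => by rw [hWval]
      rw [lhs, mul_J]
      by_cases h1 : 1 ≤ (b : ℕ)
      · rw [dif_pos h1, hWval]
        have e3 : n - ((⟨(b : ℕ) - 1, by omega⟩ : Fin (n + 1)) : ℕ) = (n - (b : ℕ)) + 1 := by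
          simp only [Fin.val_mk]
          omega
        rw [e3]
      · rw [dif_neg h1]
        obtain ⟨E, hE, hk⟩ := hpow ((n - (b : ℕ)) + 1)
        rw [hk, Matrix.add_apply, J_pow, if_neg (by simp only [Fin.val_last]; omega),
          hE i (Fin.last n) (by simp only [Fin.val_last]; omega), add_zero]
    have hNu : UT 1 (emb n R u - 1) := ut_N hu1 hu0
    have eu : (1 : Matrix (Fin (n + 1)) (Fin (n + 1)) R) + (emb n R u - 1) = emb n R u := by abel
    have hBu1 : emb n R u * geomInv (emb n R u - 1) = 1 := by
      have := mul_geomInv hNu; rwa [eu] at this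
    have hiu : (emb n R u)⁻¹ = geomInv (emb n R u - 1) := Matrix.inv_eq_right_inv hBu1
    refine ⟨u, ⟨hu1, hu0⟩, ?_⟩
    show emb n R u * J n R * (emb n R u)⁻¹ = J n R + Z
    rw [hiu]
    calc emb n R u * J n R * geomInv (emb n R u - 1)
        = (W * J n R) * geomInv (emb n R u - 1) := by rw [← hWemb]
      _ = ((J n R + Z) * W) * geomInv (emb n R u - 1) := by rw [hYW]
      _ = (J n R + Z) * (W * geomInv (emb n R u - 1)) := mul_assoc _ _ _
      _ = (J n R + Z) * (emb n R u * geomInv (emb n R u - 1)) := by rw [hWemb]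
      _ = J n R + Z := by rw [hBu1, mul_one]


end Stmt11
end
end

section
/- Let n ≥ 1, let R be a commutative ring, and let e_1,…,e_{n+1} denote the standard basis row vectors of R^{n+1}. Let Y ∈ M_{n+1}(R) be such that the determinant of the (n+1)×(n+1) matrix whose rows are e_{n+1}, e_{n+1}·Y, e_{n+1}·Y², …, e_{n+1}·Y^n is a unit of R. Let J^− ∈ M_{n+1}(R) be the matrix with (J^−)_{a+1,a} = 1 for 1 ≤ a ≤ n and all other entries 0, and let 𝔟_{n+1}(R) be the set of upper triangular matrices in M_{n+1}(R). Then there exists h ∈ GL_n(R) such that, setting h̃ = diag(h,1) ∈ GL_{n+1}(R), one has h̃^{−1}·Y·h̃ ∈ J^− + 𝔟_{n+1}(R). -/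
noncomputable section

namespace Stmt12

variable (n : ℕ) (R : Type*) [CommRing R]

/-- The matrix `J⁻ ∈ M_{n+1}(R)` with `(J⁻)_{a+1,a} = 1` for `1 ≤ a ≤ n` (1-based) and all
other entries `0`, i.e. ones exactly on the subdiagonal. -/
def Jminus : Matrix (Fin (n + 1)) (Fin (n + 1)) R :=
  Matrix.of fun a b => if (a : ℕ) = (b : ℕ) + 1 then 1 else 0

/-- The block-diagonal embedding `h ↦ h̃ = diag(h, 1)` of `M_n(R)` into `M_{n+1}(R)`. -/
def emb (h : Matrix (Fin n) (Fin n) R) : Matrix (Fin (n + 1)) (Fin (n + 1)) R :=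
  Matrix.of fun i j =>
    if hi : (i : ℕ) < n then
      if hj : (j : ℕ) < n then h ⟨i, hi⟩ ⟨j, hj⟩ else 0
    else if (j : ℕ) < n then 0 else 1

/-! ### Auxiliary definitions -/

/-- The row `e_{n+1} · Y^{n-i}`. -/
def gRow (Y : Matrix (Fin (n + 1)) (Fin (n + 1)) R) (i : Fin (n + 1)) : Fin (n + 1) → R :=
  (Y ^ (n - (i : ℕ))) (Fin.last n)

/-- Correction coefficient: the last coordinate of `gRow i` (and `0` for `i = last`). -/
def tc (Y : Matrix (Fin (n + 1)) (Fin (n + 1)) R) (i : Fin (n + 1)) : R :=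
  if i = Fin.last n then 0 else gRow n R Y i (Fin.last n)

/-- The corrected row matrix `G'` with rows `gRow i - tc i • gRow last`. -/
def Gm (Y : Matrix (Fin (n + 1)) (Fin (n + 1)) R) : Matrix (Fin (n + 1)) (Fin (n + 1)) R :=
  Matrix.of fun i j => gRow n R Y i j - tc n R Y i * gRow n R Y (Fin.last n) j

/-- The upper-left `n × n` block of `Gm`. -/
def hM (Y : Matrix (Fin (n + 1)) (Fin (n + 1)) R) : Matrix (Fin n) (Fin n) R :=
  Matrix.of fun a b => Gm n R Y a.castSucc b.castSucc

lemma tc_last (Y : Matrix (Fin (n + 1)) (Fin (n + 1)) R) : tc n R Y (Fin.last n) = 0 :=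
  if_pos rfl

lemma gRow_last (Y : Matrix (Fin (n + 1)) (Fin (n + 1)) R) (j : Fin (n + 1)) :
    gRow n R Y (Fin.last n) j = if Fin.last n = j then 1 else 0 := by
  simp [gRow, Matrix.one_apply]

/-! ### Lemmas about `emb` -/

lemma emb_cc (h : Matrix (Fin n) (Fin n) R) (a b : Fin n) :
    emb n R h a.castSucc b.castSucc = h a b := by
  simp only [emb, Matrix.of_apply, Fin.coe_castSucc, a.isLt, b.isLt, dif_pos, Fin.eta]

lemma emb_cl (h : Matrix (Fin n) (Fin n) R) (a : Fin n) :
    emb n R h a.castSucc (Fin.last n) = 0 := by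
  simp [emb, a.isLt]

lemma emb_lc (h : Matrix (Fin n) (Fin n) R) (b : Fin n) :
    emb n R h (Fin.last n) b.castSucc = 0 := by
  simp [emb, b.isLt]

lemma emb_ll (h : Matrix (Fin n) (Fin n) R) :
    emb n R h (Fin.last n) (Fin.last n) = 1 := by
  simp [emb]

lemma emb_one : emb n R (1 : Matrix (Fin n) (Fin n) R) = 1 := by
  ext i j
  induction i using Fin.lastCases with
  | last =>
    induction j using Fin.lastCases with
    | last => simp [emb_ll, Matrix.one_apply]
    | cast b => simp [emb_lc, Matrix.one_apply, (Fin.castSucc_lt_last b).ne']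
  | cast a =>
    induction j using Fin.lastCases with
    | last => simp [emb_cl, Matrix.one_apply, (Fin.castSucc_lt_last a).ne]
    | cast b => simp [emb_cc, Matrix.one_apply, Fin.castSucc_inj]

lemma emb_mul (A B : Matrix (Fin n) (Fin n) R) :
    emb n R (A * B) = emb n R A * emb n R B := by
  ext i j
  induction i using Fin.lastCases with
  | last =>
    induction j using Fin.lastCases with
    | last => simp [Matrix.mul_apply, Fin.sum_univ_castSucc, emb_ll, emb_lc, emb_cl]
    | cast b => simp [Matrix.mul_apply, Fin.sum_univ_castSucc, emb_ll, emb_lc, emb_cl]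
  | cast a =>
    induction j using Fin.lastCases with
    | last => simp [Matrix.mul_apply, Fin.sum_univ_castSucc, emb_ll, emb_lc, emb_cl, emb_cc]
    | cast b =>
      simp [Matrix.mul_apply, Fin.sum_univ_castSucc, emb_cc, emb_cl, emb_lc]

lemma emb_hM (Y : Matrix (Fin (n + 1)) (Fin (n + 1)) R) :
    emb n R (hM n R Y) = Gm n R Y := by
  ext i j
  induction i using Fin.lastCases with
  | last =>
    have := tc_last n R Y
    induction j using Fin.lastCases with
    | last => simp [emb_ll, Gm, gRow_last, this]
    | cast b =>
      simp [emb_lc, Gm, gRow_last, this, (Fin.castSucc_lt_last b).ne']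
  | cast a =>
    induction j using Fin.lastCases with
    | last =>
      have hne : a.castSucc ≠ Fin.last n := (Fin.castSucc_lt_last a).ne
      simp [emb_cl, Gm, gRow_last, tc, hne]
    | cast b => simp [emb_cc, hM]

/-! ### Invertibility of `Gm` -/

lemma Gm_det_isUnit (Y : Matrix (Fin (n + 1)) (Fin (n + 1)) R)
    (hY : IsUnit (Matrix.of fun k j : Fin (n + 1) => (Y ^ (k : ℕ)) (Fin.last n) j).det) :
    IsUnit (Gm n R Y).det := by
  set K : Matrix (Fin (n + 1)) (Fin (n + 1)) R :=
    Matrix.of fun k j : Fin (n + 1) => (Y ^ (k : ℕ)) (Fin.last n) j with hK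
  set E : Matrix (Fin (n + 1)) (Fin (n + 1)) R :=
    Matrix.of fun i j => (if i = j then (1 : R) else 0) -
      (if j = Fin.last n then tc n R Y i else 0) with hE
  have hrev : ∀ i : Fin (n + 1), ((Fin.revPerm i : Fin (n+1)) : ℕ) = n - (i : ℕ) := by
    intro i
    simp [Fin.revPerm, Fin.val_rev]
  have hfact : Gm n R Y = E * K.submatrix (⇑(Fin.revPerm : Equiv.Perm (Fin (n+1)))) id := by
    ext i j
    rw [Matrix.mul_apply]
    have : ∀ k : Fin (n + 1), E i k * K.submatrix (⇑(Fin.revPerm : Equiv.Perm (Fin (n+1)))) id k j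
        = (if i = k then K (Fin.revPerm k) j else 0) -
          (if k = Fin.last n then tc n R Y i * K (Fin.revPerm k) j else 0) := by
      intro k
      simp only [hE, Matrix.of_apply, Matrix.submatrix_apply, id_eq, sub_mul, ite_mul, one_mul,
        zero_mul]
    rw [Finset.sum_congr rfl fun k _ => this k, Finset.sum_sub_distrib,
      Finset.sum_ite_eq, Finset.sum_ite_eq']
    simp only [Finset.mem_univ, if_true, Gm, Matrix.of_apply, gRow, hK]
    rw [hrev i, hrev (Fin.last n)]
  have hdetE : E.det = 1 := by
    have htri : E.BlockTriangular id := by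
      intro i j hij
      have h1 : ¬ (i = j) := by
        intro h; subst h; exact lt_irrefl _ hij
      have h2 : ¬ (j = Fin.last n) := by
        intro h
        subst h
        exact absurd hij (by simpa using (Fin.le_last i : i ≤ Fin.last n).not_gt)
      simp [hE, h1, h2]
    rw [Matrix.det_of_upperTriangular htri]
    have : ∀ i : Fin (n + 1), E i i = 1 := by
      intro i
      by_cases h : i = Fin.last n
      · subst h; simp [hE, tc_last]
      · simp [hE, h]
    simp [this]
  have hdetK : IsUnit (K.submatrix (⇑(Fin.revPerm : Equiv.Perm (Fin (n+1)))) id).det := by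
    rw [Matrix.det_permute]
    refine IsUnit.mul ?_ hY
    rcases Int.units_eq_one_or (Equiv.Perm.sign (Fin.revPerm : Equiv.Perm (Fin (n+1)))) with h | h <;>
      rw [h] <;> simp
  rw [hfact, Matrix.det_mul, hdetE, one_mul]
  exact hdetK

/-- If `Y ∈ M_{n+1}(R)` is such that the determinant of the matrix with rows
`e_{n+1}, e_{n+1}·Y, …, e_{n+1}·Y^n` is a unit of `R`, then there is `h ∈ GL_n(R)` with
`h̃⁻¹·Y·h̃ ∈ J⁻ + 𝔟_{n+1}(R)`, where `𝔟_{n+1}(R)` is the set of upper triangular matrices. -/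
theorem statement12 (hn : 1 ≤ n) (Y : Matrix (Fin (n + 1)) (Fin (n + 1)) R)
    (hY : IsUnit (Matrix.of fun k j : Fin (n + 1) => (Y ^ (k : ℕ)) (Fin.last n) j).det) :
    ∃ h : Matrix (Fin n) (Fin n) R, IsUnit h.det ∧
      ∃ Z : Matrix (Fin (n + 1)) (Fin (n + 1)) R,
        (∀ i j : Fin (n + 1), j < i → Z i j = 0) ∧
        (emb n R h)⁻¹ * Y * emb n R h = Jminus n R + Z := by
  set G' := Gm n R Y with hG'
  have hdetG' : IsUnit G'.det := Gm_det_isUnit n R Y hY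
  have hemb : emb n R (hM n R Y) = G' := emb_hM n R Y
  have hGMul : G' * G'⁻¹ = 1 := Matrix.mul_nonsing_inv _ hdetG'
  -- the upper-left block of `G'⁻¹` is a right inverse of `hM`
  have hblock : hM n R Y * (Matrix.of fun a b : Fin n => G'⁻¹ a.castSucc b.castSucc) = 1 := by
    ext a b
    rw [Matrix.mul_apply]
    have key : (G' * G'⁻¹) a.castSucc b.castSucc = (1 : Matrix (Fin (n+1)) (Fin (n+1)) R)
        a.castSucc b.castSucc := by rw [hGMul]
    rw [Matrix.mul_apply, Fin.sum_univ_castSucc] at key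
    have hzero : G' a.castSucc (Fin.last n) = 0 := by
      rw [← hemb]; exact emb_cl n R _ a
    rw [hzero, zero_mul, add_zero] at key
    have : ∀ k : Fin n, hM n R Y a k * (Matrix.of fun a b : Fin n =>
        G'⁻¹ a.castSucc b.castSucc) k b = G' a.castSucc k.castSucc * G'⁻¹ k.castSucc b.castSucc := by
      intro k; simp [hM, hG']
    rw [Finset.sum_congr rfl fun k _ => this k, key]
    simp [Matrix.one_apply, Fin.castSucc_inj]
  have hdet_hM : IsUnit (hM n R Y).det := by
    have := congrArg Matrix.det hblock
    rw [Matrix.det_mul, Matrix.det_one] at this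
    exact IsUnit.of_mul_eq_one _ this
  refine ⟨(hM n R Y)⁻¹, Matrix.isUnit_nonsing_inv_det _ hdet_hM, ?_⟩
  set h := (hM n R Y)⁻¹ with hh
  have h1 : emb n R (hM n R Y) * emb n R h = 1 := by
    rw [← emb_mul, Matrix.mul_nonsing_inv _ hdet_hM, emb_one]
  have h2 : emb n R h * emb n R (hM n R Y) = 1 := by
    rw [← emb_mul, Matrix.nonsing_inv_mul _ hdet_hM, emb_one]
  have hinv : (emb n R h)⁻¹ = G' := by
    rw [← hemb]; exact Matrix.inv_eq_left_inv h1
  set W := (emb n R h)⁻¹ * Y * emb n R h with hWdef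
  have hWG : W * G' = G' * Y := by
    rw [hWdef, hinv, Matrix.mul_assoc, ← hemb, h2, Matrix.mul_one]
  refine ⟨W - Jminus n R, ?_, by abel⟩
  intro i j hji
  have hine : i ≠ 0 := by
    intro h0; subst h0; exact (Fin.not_lt_zero j) hji
  obtain ⟨a, rfl⟩ : ∃ a : Fin n, i = a.succ := Fin.eq_succ_of_ne_zero hine
  -- the auxiliary index `n - 1`
  set p : Fin (n + 1) := ⟨n - 1, by omega⟩ with hp
  -- the coefficient vector of row `a.succ` of `W`
  set c : Fin (n + 1) → R := fun k =>
    (if k = a.castSucc then 1 else 0) + (if k = p then -(tc n R Y a.succ) else 0) +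
      (if k = Fin.last n then tc n R Y a.castSucc - tc n R Y a.succ * tc n R Y p else 0) with hc
  -- power computations
  have e1 : ∀ jj, ∑ k, gRow n R Y a.succ k * Y k jj = gRow n R Y a.castSucc jj := by
    intro jj
    have harith : n - ((a.succ : Fin (n+1)) : ℕ) + 1 = n - ((a.castSucc : Fin (n+1)) : ℕ) := by
      have := a.isLt
      simp only [Fin.val_succ, Fin.coe_castSucc]
      omega
    calc ∑ k, gRow n R Y a.succ k * Y k jj
        = (Y ^ (n - ((a.succ : Fin (n+1)) : ℕ)) * Y) (Fin.last n) jj := by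
          rw [Matrix.mul_apply]; rfl
      _ = gRow n R Y a.castSucc jj := by rw [← pow_succ, harith]; rfl
  have e2 : ∀ jj, ∑ k, gRow n R Y (Fin.last n) k * Y k jj = gRow n R Y p jj := by
    intro jj
    have harith : n - ((Fin.last n : Fin (n+1)) : ℕ) + 1 = n - ((p : Fin (n+1)) : ℕ) := by
      simp only [Fin.val_last, hp]
      omega
    calc ∑ k, gRow n R Y (Fin.last n) k * Y k jj
        = (Y ^ (n - ((Fin.last n : Fin (n+1)) : ℕ)) * Y) (Fin.last n) jj := by
          rw [Matrix.mul_apply]; rfl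
      _ = gRow n R Y p jj := by rw [← pow_succ, harith]; rfl
  -- the key row identity
  have hrow : ∀ jj, ∑ k, G' a.succ k * Y k jj = ∑ k, c k * G' k jj := by
    intro jj
    have lhs_eq : ∑ k, G' a.succ k * Y k jj
        = gRow n R Y a.castSucc jj - tc n R Y a.succ * gRow n R Y p jj := by
      have : ∀ k, G' a.succ k * Y k jj = gRow n R Y a.succ k * Y k jj -
          tc n R Y a.succ * (gRow n R Y (Fin.last n) k * Y k jj) := by
        intro k; simp only [hG', Gm, Matrix.of_apply]; ring
      rw [Finset.sum_congr rfl fun k _ => this k, Finset.sum_sub_distrib, ← Finset.mul_sum,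
        e1 jj, e2 jj]
    have rhs_eq : ∑ k, c k * G' k jj = 1 * G' a.castSucc jj +
        (-(tc n R Y a.succ)) * G' p jj +
        (tc n R Y a.castSucc - tc n R Y a.succ * tc n R Y p) * G' (Fin.last n) jj := by
      have : ∀ k, c k * G' k jj = (if k = a.castSucc then (1:R) * G' k jj else 0) +
          (if k = p then (-(tc n R Y a.succ)) * G' k jj else 0) +
          (if k = Fin.last n then
            (tc n R Y a.castSucc - tc n R Y a.succ * tc n R Y p) * G' k jj else 0) := by
        intro k
        simp only [hc, add_mul, ite_mul, zero_mul]
      rw [Finset.sum_congr rfl fun k _ => this k, Finset.sum_add_distrib,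
        Finset.sum_add_distrib, Finset.sum_ite_eq', Finset.sum_ite_eq', Finset.sum_ite_eq']
      simp
    rw [lhs_eq, rhs_eq]
    simp only [hG', Gm, Matrix.of_apply, tc_last]
    ring
  -- conclude `W a.succ = c`
  have hWrow : W a.succ = c := by
    have hv : Matrix.vecMul (W a.succ) G' = Matrix.vecMul c G' := by
      funext jj
      have l1 : Matrix.vecMul (W a.succ) G' jj = (W * G') a.succ jj := rfl
      have l2 : Matrix.vecMul c G' jj = ∑ k, c k * G' k jj := rfl
      rw [l1, l2, hWG, Matrix.mul_apply, hrow]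
    have := congrArg (fun v => Matrix.vecMul v G'⁻¹) hv
    simpa only [Matrix.vecMul_vecMul, hGMul, Matrix.vecMul_one] using this
  -- finish: entries below the subdiagonal vanish, subdiagonal entry is 1
  have hjlast : j ≠ Fin.last n := by
    have : (j : ℕ) < (a.succ : Fin (n+1)) := hji
    have h2 : ((a.succ : Fin (n+1)) : ℕ) ≤ n := Fin.le_last _
    intro h; subst h
    simp only [Fin.val_last] at this
    omega
  have hjval : (j : ℕ) < (a : ℕ) + 1 := hji
  simp only [Matrix.sub_apply]
  rw [congrFun hWrow j]
  by_cases hja : (j : ℕ) = (a : ℕ)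
  · -- subdiagonal entry
    have hjcs : j = a.castSucc := by
      apply Fin.ext; simpa using hja
    have hJ : Jminus n R a.succ j = 1 := by
      simp [Jminus, hja]
    rw [hJ, hc]
    by_cases hjp : j = p
    · have hlast : (a.succ : Fin (n+1)) = Fin.last n := by
        apply Fin.ext
        have : (j : ℕ) = n - 1 := by rw [hjp]
        simp only [Fin.val_succ, Fin.val_last]
        omega
      simp only [hc]
      rw [if_pos hjcs, if_pos hjp, if_neg hjlast, hlast, tc_last]
      ring
    · simp only [hc]
      rw [if_pos hjcs, if_neg hjp, if_neg hjlast]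
      ring
  · -- strictly below the subdiagonal
    have hJ : Jminus n R a.succ j = 0 := by
      simp only [Jminus, Matrix.of_apply, Fin.val_succ]
      rw [if_neg]; omega
    have hjcs : j ≠ a.castSucc := by
      intro h; apply hja; rw [h]; simp
    have hjp : j ≠ p := by
      intro h
      have h1 : (j : ℕ) = n - 1 := by rw [h]
      have h2 : (a : ℕ) < n := a.isLt
      omega
    rw [hJ]
    simp only [hc]
    rw [if_neg hjcs, if_neg hjp, if_neg hjlast]
    ring

end Stmt12
end
end

section
/- Let n ≥ 1 and let R be a commutative ring. Let J^− ∈ M_{n+1}(R) be the matrix with (J^−)_{a+1,a} = 1 for 1 ≤ a ≤ n and all other entries 0, and let 𝔟_{n+1}(R) be the set of upper triangular matrices in M_{n+1}(R). Let B ∈ J^− + 𝔟_{n+1}(R) and let h ∈ GL_n(R) be such that, with h̃ = diag(h,1) ∈ GL_{n+1}(R), one has h̃·B·h̃^{−1} ∈ J^− + 𝔟_{n+1}(R). Then h is upper unitriangular, i.e. h_{aa} = 1 for all a and h_{ab} = 0 for a > b. -/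
noncomputable section

namespace Stmt13

variable (n : ℕ) (R : Type*) [CommRing R]

/-- The matrix `J⁻ ∈ M_{n+1}(R)` with `(J⁻)_{a+1,a} = 1` for `1 ≤ a ≤ n` (1-based) and all
other entries `0`, i.e. ones exactly on the subdiagonal. -/
def Jminus : Matrix (Fin (n + 1)) (Fin (n + 1)) R :=
  Matrix.of fun a b => if (a : ℕ) = (b : ℕ) + 1 then 1 else 0

/-- The block-diagonal embedding `h ↦ h̃ = diag(h, 1)` of `M_n(R)` into `M_{n+1}(R)`. -/
def emb (h : Matrix (Fin n) (Fin n) R) : Matrix (Fin (n + 1)) (Fin (n + 1)) R :=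
  Matrix.of fun i j =>
    if hi : (i : ℕ) < n then
      if hj : (j : ℕ) < n then h ⟨i, hi⟩ ⟨j, hj⟩ else 0
    else if (j : ℕ) < n then 0 else 1

/-- Structure of the last row of powers of a matrix in the slice `J⁻ + 𝔟`. -/
lemma powRow (X Z : Matrix (Fin (n + 1)) (Fin (n + 1)) R)
    (hZ : ∀ i j : Fin (n + 1), j < i → Z i j = 0)
    (hX : X = Jminus n R + Z) :
    ∀ k, k ≤ n →
      (∀ j : Fin (n + 1), (j : ℕ) < n - k → (X ^ k) (Fin.last n) j = 0) ∧
      (X ^ k) (Fin.last n) (⟨n - k, by omega⟩ : Fin (n + 1)) = 1 := by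
  intro k
  induction k with
  | zero =>
    intro _
    constructor
    · intro j hj
      have hne : Fin.last n ≠ j := by
        intro e
        have : (Fin.last n : ℕ) = (j : ℕ) := by rw [e]
        simp [Fin.last] at this; omega
      simp [Matrix.one_apply, hne]
    · have he : (⟨n - 0, by omega⟩ : Fin (n + 1)) = Fin.last n := by
        apply Fin.ext; simp [Fin.last]
      rw [pow_zero, he, Matrix.one_apply_eq]
  | succ k ih =>
    intro hk
    have hk' : k ≤ n := by omega
    obtain ⟨ih0, ih1⟩ := ih hk'
    have key : ∀ j : Fin (n + 1), ∀ _hj : (j : ℕ) < n - k,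
        (X ^ (k + 1)) (Fin.last n) j
          = (X ^ k) (Fin.last n) (⟨(j : ℕ) + 1, by omega⟩ : Fin (n + 1)) := by
      intro j hj
      rw [pow_succ, Matrix.mul_apply]
      have hsplit : ∀ i : Fin (n + 1),
          (X ^ k) (Fin.last n) i * X i j
            = (X ^ k) (Fin.last n) i * Jminus n R i j
              + (X ^ k) (Fin.last n) i * Z i j := by
        intro i; rw [hX]; simp [Matrix.add_apply, mul_add]
      rw [Finset.sum_congr rfl (fun i _ => hsplit i), Finset.sum_add_distrib]
      have h2 : ∑ i : Fin (n + 1), (X ^ k) (Fin.last n) i * Z i j = 0 := by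
        apply Finset.sum_eq_zero
        intro i _
        by_cases hij : (j : ℕ) < (i : ℕ)
        · rw [hZ i j hij, mul_zero]
        · have : (i : ℕ) < n - k := by omega
          rw [ih0 i this, zero_mul]
      have h1 : ∑ i : Fin (n + 1), (X ^ k) (Fin.last n) i * Jminus n R i j
          = (X ^ k) (Fin.last n) (⟨(j : ℕ) + 1, by omega⟩ : Fin (n + 1)) := by
        rw [Finset.sum_eq_single (⟨(j : ℕ) + 1, by omega⟩ : Fin (n + 1))]
        · have : Jminus n R (⟨(j : ℕ) + 1, by omega⟩ : Fin (n + 1)) j = 1 := by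
            simp [Jminus]
          rw [this, mul_one]
        · intro i _ hne
          have : Jminus n R i j = 0 := by
            simp only [Jminus, Matrix.of_apply, ite_eq_right_iff]
            intro he
            exact absurd (Fin.ext he) hne
          rw [this, mul_zero]
        · intro habs; exact absurd (Finset.mem_univ _) habs
      rw [h1, h2, add_zero]
    constructor
    · intro j hj
      have hj' : (j : ℕ) < n - k := by omega
      rw [key j hj']
      exact ih0 _ (by simpa using (by omega : (j : ℕ) + 1 < n - k))
    · have hlt : ((⟨n - (k + 1), by omega⟩ : Fin (n + 1)) : ℕ) < n - k := by
        show n - (k + 1) < n - k; omega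
      have := key (⟨n - (k + 1), by omega⟩ : Fin (n + 1)) hlt
      rw [this]
      have he : (⟨((⟨n - (k + 1), by omega⟩ : Fin (n + 1)) : ℕ) + 1, by omega⟩ : Fin (n + 1))
          = (⟨n - k, by omega⟩ : Fin (n + 1)) := by
        apply Fin.ext; simp; omega
      rw [he]; exact ih1

lemma emb_apply_lt (h : Matrix (Fin n) (Fin n) R) (i j : Fin (n + 1))
    (hi : (i : ℕ) < n) (hj : (j : ℕ) < n) :
    emb n R h i j = h ⟨i, hi⟩ ⟨j, hj⟩ := by
  simp [emb, hi, hj]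

lemma emb_last (h : Matrix (Fin n) (Fin n) R) (j : Fin (n + 1)) :
    emb n R h (Fin.last n) j = if (j : ℕ) < n then 0 else 1 := by
  simp [emb, Fin.last]

lemma det_emb (h : Matrix (Fin n) (Fin n) R) : (emb n R h).det = h.det := by
  have hsub : (emb n R h).submatrix finSumFinEquiv finSumFinEquiv
      = Matrix.fromBlocks h 0 0 (1 : Matrix (Fin 1) (Fin 1) R) := by
    ext i j
    cases i with
    | inl i =>
      cases j with
      | inl j =>
        simp [emb, Matrix.fromBlocks, i.isLt, j.isLt]
      | inr j =>
        have : ¬ ((n + (j : ℕ)) < n) := by omega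
        simp [emb, Matrix.fromBlocks, i.isLt, this]
    | inr i =>
      have hi : ¬ ((n + (i : ℕ)) < n) := by omega
      cases j with
      | inl j =>
        simp [emb, Matrix.fromBlocks, hi, j.isLt]
      | inr j =>
        have hj : ¬ ((n + (j : ℕ)) < n) := by omega
        have : i = j := Subsingleton.elim i j
        simp [emb, Matrix.fromBlocks, hi, hj, this, Matrix.one_apply]
  have := Matrix.det_submatrix_equiv_self finSumFinEquiv (emb n R h)
  rw [hsub] at this
  rw [← this, Matrix.det_fromBlocks_zero₂₁, Matrix.det_one, mul_one]

/-- If `B ∈ J⁻ + 𝔟_{n+1}(R)` and `h ∈ GL_n(R)` is such that `h̃·B·h̃⁻¹ ∈ J⁻ + 𝔟_{n+1}(R)`,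
then `h` is upper unitriangular. -/
theorem statement13 (hn : 1 ≤ n) (B : Matrix (Fin (n + 1)) (Fin (n + 1)) R)
    (hB : ∃ Z : Matrix (Fin (n + 1)) (Fin (n + 1)) R,
      (∀ i j : Fin (n + 1), j < i → Z i j = 0) ∧ B = Jminus n R + Z)
    (h : Matrix (Fin n) (Fin n) R) (hdet : IsUnit h.det)
    (hconj : ∃ Z : Matrix (Fin (n + 1)) (Fin (n + 1)) R,
      (∀ i j : Fin (n + 1), j < i → Z i j = 0) ∧
      emb n R h * B * (emb n R h)⁻¹ = Jminus n R + Z) :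
    (∀ a, h a a = 1) ∧ ∀ a b : Fin n, b < a → h a b = 0 := by
  obtain ⟨Z, hZ, hBdef⟩ := hB
  obtain ⟨Z', hZ', hC⟩ := hconj
  set H := emb n R h with hH
  have hdetH : IsUnit H.det := by rw [hH, det_emb]; exact hdet
  set C := Jminus n R + Z' with hCdef
  have hCH : C * H = H * B := by
    rw [← hC, Matrix.mul_assoc (H * B), Matrix.nonsing_inv_mul _ hdetH, Matrix.mul_one]
  have powCH : ∀ k, C ^ k * H = H * B ^ k := by
    intro k
    induction k with
    | zero => simp
    | succ k ihk =>
      rw [pow_succ, pow_succ, Matrix.mul_assoc, hCH, ← Matrix.mul_assoc, ihk,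
        Matrix.mul_assoc]
  have keyrow : ∀ k (j : Fin (n + 1)),
      (C ^ k * H) (Fin.last n) j = (B ^ k) (Fin.last n) j := by
    intro k j
    rw [powCH, Matrix.mul_apply]
    rw [Finset.sum_eq_single (Fin.last n)]
    · have : H (Fin.last n) (Fin.last n) = 1 := by
        rw [hH, emb_last]; simp [Fin.last]
      rw [this, one_mul]
    · intro i _ hne
      have hi : (i : ℕ) < n := by
        have := i.isLt
        rcases Nat.lt_or_ge (i : ℕ) n with h' | h'
        · exact h'
        · exfalso; exact hne (Fin.ext (by simp [Fin.last]; omega))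
      have : H (Fin.last n) i = 0 := by rw [hH, emb_last]; simp [hi]
      rw [this, zero_mul]
    · intro habs; exact absurd (Finset.mem_univ _) habs
  have hrowB := powRow n R B Z hZ hBdef
  have hrowC := powRow n R C Z' hZ' hCdef
  -- main downward induction on rows
  have main : ∀ k, k ≤ n → ∀ b : Fin (n + 1), (b : ℕ) ≤ n - k →
      H (⟨n - k, by omega⟩ : Fin (n + 1)) b = if (b : ℕ) = n - k then 1 else 0 := by
    intro k
    induction k using Nat.strong_induction_on with
    | _ k IH =>
      intro hk b hb
      have e1 := keyrow k b
      rw [Matrix.mul_apply] at e1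
      have e2 : ∑ i : Fin (n + 1), (C ^ k) (Fin.last n) i * H i b
          = (C ^ k) (Fin.last n) (⟨n - k, by omega⟩ : Fin (n + 1))
              * H (⟨n - k, by omega⟩ : Fin (n + 1)) b := by
        apply Finset.sum_eq_single
        · intro i _ hne
          rcases lt_trichotomy (i : ℕ) (n - k) with hlt | heq | hgt
          · rw [(hrowC k hk).1 i hlt, zero_mul]
          · exact absurd (Fin.ext heq) hne
          · have hile : (i : ℕ) ≤ n := by omega
            have hm : n - (i : ℕ) < k := by omega
            have hmn : n - (i : ℕ) ≤ n := by omega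
            have hbb : (b : ℕ) ≤ n - (n - (i : ℕ)) := by omega
            have := IH (n - (i : ℕ)) hm hmn b hbb
            have hei : (⟨n - (n - (i : ℕ)), by omega⟩ : Fin (n + 1)) = i := by
              apply Fin.ext; simp; omega
            rw [hei] at this
            rw [this]
            have : ¬ ((b : ℕ) = n - (n - (i : ℕ))) := by omega
            simp [this]
        · intro habs; exact absurd (Finset.mem_univ _) habs
      rw [e2, (hrowC k hk).2, one_mul] at e1
      rw [e1]
      rcases Nat.lt_or_ge (b : ℕ) (n - k) with hlt | hge
      · rw [(hrowB k hk).1 b hlt]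
        have : ¬ ((b : ℕ) = n - k) := by omega
        simp [this]
      · have heq : (b : ℕ) = n - k := by omega
        have : b = (⟨n - k, by omega⟩ : Fin (n + 1)) := Fin.ext heq
        rw [this]
        simp [(hrowB k hk).2]
  constructor
  · intro a
    have ha : (a : ℕ) < n := a.isLt
    have hnk : n - (n - (a : ℕ)) = (a : ℕ) := by omega
    have := main (n - (a : ℕ)) (by omega) (Fin.castSucc a) (by simp [Fin.castSucc]; omega)
    rw [show (⟨n - (n - (a : ℕ)), by omega⟩ : Fin (n + 1)) = Fin.castSucc a from
      Fin.ext (by simp [Fin.castSucc]; omega)] at this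
    have hres : H (Fin.castSucc a) (Fin.castSucc a) = 1 := by
      rw [this]
      simp only [Fin.coe_castSucc]
      rw [if_pos (by omega)]
    rw [hH, emb_apply_lt n R h _ _ (by simpa using ha) (by simpa using ha)] at hres
    simpa using hres
  · intro a b hba
    have ha : (a : ℕ) < n := a.isLt
    have hb : (b : ℕ) < n := b.isLt
    have hba' : (b : ℕ) < (a : ℕ) := hba
    have := main (n - (a : ℕ)) (by omega) (Fin.castSucc b) (by simp [Fin.castSucc]; omega)
    rw [show (⟨n - (n - (a : ℕ)), by omega⟩ : Fin (n + 1)) = Fin.castSucc a from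
      Fin.ext (by simp [Fin.castSucc]; omega)] at this
    have hres : H (Fin.castSucc a) (Fin.castSucc b) = 0 := by
      rw [this]
      have hne : (b : ℕ) ≠ n - (n - (a : ℕ)) := by omega
      simp [hne]
    rw [hH, emb_apply_lt n R h _ _ (by simpa using ha) (by simpa using hb)] at hres
    simpa using hres

end Stmt13
end
end
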